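/- arXiv:2110.01508 — 4 statements merged into one kernel-verified Lean document; each statement's English description precedes it below -/
import Mathlib

section
/- Let t be a semifinite template with zigzag flange fl(t) = (a₀, …, a_k) and sections t₁, …, t_k. The map f : Z(t) ∖ J(t) → Z(t₁) × ⋯ × Z(t_k), λ ↦ (λ^{(1)}, …, λ^{(k)}), given by the unique decomposition bw(λ) = a₀ ⊔ bw(λ^{(1)}) ⊔ a₁ ⊔ ⋯ ⊔ bw(λ^{(k)}) ⊔ a_k, is an embedding of graded graphs: it is injective, and for λ, μ ∈ Z(t) ∖ J(t) one has λ ↗ μ if and only if f(λ) ↗ f(μ) in the direct product graph. Moreover, the image of f is an ideal of Z(t₁) × ⋯ × Z(t_k). -/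
/-!
Common definitions: the zigzag graph on binary words, templates and their coideals,
zigzag flanges and sections, the functions `F_λ(u)` and `φ_{t,w}`, and harmonic /
semifinite / indecomposable functions on subgraphs of the zigzag graph.
-/

open scoped ENNReal NNReal

namespace Zigzag

/-- Binary words: `true` is `+`, `false` is `−`. -/
abbrev BW := List Bool

/-- `CoveredBy a b`: `b` covers `a` in the subword order, i.e. `|b| = |a| + 1` and `a`
is a subword of `b`; these are the edges of the zigzag graph. -/
def CoveredBy (a b : BW) : Prop := a.Sublist b ∧ b.length = a.length + 1

/-- The set of upper neighbours of `a` lying in `S` is finite. -/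
lemma upSet_finite (S : Set BW) (a : BW) : {b | b ∈ S ∧ CoveredBy a b}.Finite :=
  (List.finite_length_eq Bool (a.length + 1)).subset (fun _ hb => hb.2.2)

/-- The finset of upper neighbours of `a` inside `S`. -/
noncomputable def upFinset (S : Set BW) (a : BW) : Finset BW :=
  (upSet_finite S a).toFinset

/-- A `[0,∞]`-valued function is harmonic on `S ⊆ Z` (with the edges induced from the
zigzag graph) if its value at any vertex of `S` equals the sum of its values at the
upper neighbours lying in `S`. -/
def HarmonicOn (S : Set BW) (φ : BW → ℝ≥0∞) : Prop :=
  ∀ a ∈ S, φ a = ∑ b ∈ upFinset S a, φ b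

/-- A template: a nonempty sequence of clusters with alternating signs, each cluster
being a sign (`true` = `+`, `false` = `−`) with a multiplicity in `{1,2,…} ∪ {∞}`,
containing at least one infinite cluster. -/
structure Template where
  clusters : List (Bool × ℕ∞)
  ne : clusters ≠ []
  pos : ∀ c ∈ clusters, c.2 ≠ 0
  alternating : clusters.Chain' fun c d => c.1 ≠ d.1
  hasInf : ∃ c ∈ clusters, c.2 = ⊤

/-- The binary word obtained from a list of clusters by replacing every infinite
multiplicity by `N` (and keeping the finite multiplicities). -/
def clWord (cs : List (Bool × ℕ∞)) (N : ℕ) : BW :=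
  (cs.map fun c => List.replicate (if c.2 = ⊤ then N else c.2.toNat) c.1).flatten

/-- The coideal generated by a list of clusters: all binary words that are subwords of
some instantiation. -/
def Zcl (cs : List (Bool × ℕ∞)) : Set BW := {a | ∃ N, a.Sublist (clWord cs N)}

/-- The coideal `Z(t)` of the zigzag graph attached to a template `t`. -/
def Zt (t : Template) : Set BW := Zcl t.clusters

/-- The cluster in position `i` of `t` is a separating cluster: a one-symbol finite
cluster which is not outermost and whose two neighbours are infinite clusters
(necessarily of the same sign). -/
def Template.isSep (t : Template) (i : ℕ) : Prop :=
  0 < i ∧ i + 1 < t.clusters.length ∧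
  (t.clusters.getD i (true, 1)).2 = 1 ∧
  (t.clusters.getD (i - 1) (true, 1)).2 = ⊤ ∧
  (t.clusters.getD (i + 1) (true, 1)).2 = ⊤

/-- A template is finite if all its finite clusters are separating; otherwise it is
semifinite. -/
def Template.IsFiniteTemplate (t : Template) : Prop :=
  ∀ i < t.clusters.length, (t.clusters.getD i (true, 1)).2 ≠ ⊤ → t.isSep i

/-- The number of infinite clusters of a template. -/
def Template.numInf (t : Template) : ℕ :=
  (t.clusters.filter fun c => decide (c.2 = ⊤)).length

/-- Position `p` of `t` carries a finite non-separating cluster, i.e. a cluster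
contributing to the zigzag flange of `t`. -/
def IsFlangePos (t : Template) (p : ℕ) : Prop :=
  p < t.clusters.length ∧ (t.clusters.getD p (true, 1)).2 ≠ ⊤ ∧ ¬t.isSep p

/-- Decrease by one the multiplicity of the cluster in position `p`. -/
def decAt (cs : List (Bool × ℕ∞)) (p : ℕ) : List (Bool × ℕ∞) :=
  cs.set p ((cs.getD p (true, 1)).1, (cs.getD p (true, 1)).2 - 1)

/-- The coideal `J(t)`: the union of the coideals `Z(r)` over all `r` obtained from `t`
by removing a single symbol from a cluster corresponding to a block of a binary word
from the zigzag flange of `t` (no merging of clusters is needed to generate `Z(r)`). -/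
def Jt (t : Template) : Set BW :=
  {a | ∃ p, IsFlangePos t p ∧ a ∈ Zcl (decAt t.clusters p)}

/-- The canonical splitting of a template `t` into its zigzag flange
`fl(t) = (a₀, …, a_k)` (given by the lists `A 0, …, A k` of clusters, each consisting
of finite non-separating clusters of `t`) and its sections `t₁, …, t_k` (the maximal
groups of consecutive clusters forming finite templates), so that
`t = (a₀, t₁, a₁, …, a_{k−1}, t_k, a_k)`.  The two `interior` conditions express the
maximality of the decomposition. -/
structure SectionData (t : Template) where
  k : ℕ
  A : Fin (k + 1) → List (Bool × ℕ∞)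
  T : Fin k → Template
  concat : t.clusters
      = A 0 ++ (List.ofFn fun i : Fin k => (T i).clusters ++ A i.succ).flatten
  finA : ∀ j, ∀ c ∈ A j, c.2 ≠ ⊤
  secFin : ∀ i, (T i).IsFiniteTemplate
  interior_ne : ∀ j : Fin (k + 1), (j : ℕ) ≠ 0 → (j : ℕ) ≠ k → A j ≠ []
  interior_not_sep : ∀ j : Fin (k + 1), (j : ℕ) ≠ 0 → (j : ℕ) ≠ k →
      ∀ s : Bool, A j ≠ [(s, 1)]

/-- The binary word corresponding to a list of finite clusters (a flange word). -/
def flangeWord (cs : List (Bool × ℕ∞)) : BW :=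
  (cs.map fun c => List.replicate c.2.toNat c.1).flatten

/-- `a₀ ⊔ ℓ 1 ⊔ a₁ ⊔ … ⊔ ℓ k ⊔ a_k` (empty flange words disappear). -/
def assemble {t : Template} (D : SectionData t) (ℓ : Fin D.k → BW) : BW :=
  flangeWord (D.A 0) ++ (List.ofFn fun i : Fin D.k => ℓ i ++ flangeWord (D.A i.succ)).flatten

/-- `ℓ` is a decomposition of `a` along the sections of `t`:
`bw(a) = a₀ ⊔ bw(ℓ 1) ⊔ a₁ ⊔ … ⊔ bw(ℓ k) ⊔ a_k` with `ℓ i ∈ Z(tᵢ)`. -/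
def decompOf {t : Template} (D : SectionData t) (a : BW) (ℓ : Fin D.k → BW) : Prop :=
  (∀ i, ℓ i ∈ Zt (D.T i)) ∧ a = assemble D ℓ

/-- The signs of the infinite clusters of a list of clusters, in order. -/
def infSigns (cs : List (Bool × ℕ∞)) : List Bool :=
  (cs.filter fun c => decide (c.2 = ⊤)).map Prod.fst

/-- The number of weights consumed by the sections preceding the `i`-th one. -/
def secOffset {t : Template} (D : SectionData t) (i : Fin D.k) : ℕ :=
  ∑ i' ∈ Finset.univ.filter (· < i), (infSigns (D.T i').clusters).length

/-- The part `vᵢ` of the tuple of weights `w` corresponding to the infinite clusters of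
the `i`-th section, as a sequence of (sign, weight) pairs. -/
def vD {t : Template} (D : SectionData t) (w : List ℝ) (i : Fin D.k) : List (Bool × ℝ) :=
  (infSigns (D.T i).clusters).zip (w.drop (secOffset D i))

/-- `F_λ(u)` for a finite sequence `u` of (sign, length) pairs and a zigzag `λ`
(encoded by its binary word `a`, so that `λ` has `a.length + 1` boxes): the sum, over
all decompositions of `λ` into `u.length` consecutive (possibly empty) zigzags
`λ(1), …, λ(m)` with `λ(i)` a row when the `i`-th sign is `+` and a column when it is
`−`, of `u₁ ^ |λ(1)| ⋯ u_m ^ |λ(m)|`.  A decomposition is recorded by the tuple `c` of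
the numbers of boxes of the pieces; the row/column constraint says that the letters of
`a` strictly inside the `i`-th group of boxes all equal the `i`-th sign. -/
noncomputable def Fword (u : List (Bool × ℝ)) (a : BW) : ℝ :=
  ∑ c ∈ (Finset.Nat.antidiagonalTuple u.length (a.length + 1)).filter
      (fun c => ∀ i : Fin u.length,
        (a.drop (∑ i' ∈ Finset.univ.filter (· < i), c i')).take (c i - 1)
          = List.replicate (c i - 1) (u.get i).1),
    ∏ i, (u.get i).2 ^ c i

open Classical in
/-- The function `φ_{t,w}` attached to a semifinite zigzag growth model `(t, w)`:
it equals `+∞` on `J(t)`, and on `Z(t) ∖ J(t)` it equals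
`F_{λ^{(1)}}(v₁) ⋯ F_{λ^{(k)}}(v_k)`, where `(λ^{(1)}, …, λ^{(k)})` is the (unique)
decomposition of `λ` along the sections of `t` (it is `0` off `Z(t)`). -/
noncomputable def phiTW (t : Template) (D : SectionData t) (w : List ℝ) (a : BW) : ℝ≥0∞ :=
  if a ∉ Zt t then 0
  else if a ∈ Jt t then ⊤
  else if h : ∃ ℓ : Fin D.k → BW, decompOf D a ℓ then
    ENNReal.ofReal (∏ i, Fword (vD D w i) (h.choose i))
  else 0

section Kcone

/-- The relation `λ = ∑_{μ : λ ↗ μ} μ` (within `S`) as an element of the free module. -/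
noncomputable def relOf (S : Set BW) (a : BW) : BW →₀ ℝ :=
  Finsupp.single a 1 - ∑ b ∈ upFinset S a, Finsupp.single b 1

/-- The submodule of relations defining `K(S)`. -/
noncomputable def Krel (S : Set BW) : Submodule ℝ (BW →₀ ℝ) :=
  Submodule.span ℝ {f | ∃ a ∈ S, f = relOf S a}

/-- The class of `f` in `K(S) = (⊕_{λ ∈ S} ℝ λ) ⧸ (relations)`. -/
noncomputable def kmk (S : Set BW) (f : BW →₀ ℝ) : (BW →₀ ℝ) ⧸ Krel S :=
  Submodule.Quotient.mk f

/-- Nonnegative formal combinations of vertices of `S`. -/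
def NonnegOn (S : Set BW) (f : BW →₀ ℝ) : Prop :=
  (∀ x, 0 ≤ f x) ∧ ∀ x ∈ f.support, x ∈ S

/-- The cone `K⁺(S)` spanned by the vertices of `S` in `K(S)`. -/
noncomputable def Kpos (S : Set BW) : Set ((BW →₀ ℝ) ⧸ Krel S) :=
  kmk S '' {f | NonnegOn S f}

/-- The order defined by the cone `K⁺(S)`: `x ≤_K y` iff `y − x ∈ K⁺(S)`. -/
def leK (S : Set BW) (x y : (BW →₀ ℝ) ⧸ Krel S) : Prop := y - x ∈ Kpos S

/-- The value of (the canonical extension of) `φ` at a nonnegative combination of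
vertices. -/
noncomputable def phiHat (φ : BW → ℝ≥0∞) (f : BW →₀ ℝ) : ℝ≥0∞ :=
  ∑ x ∈ f.support, ENNReal.ofReal (f x) * φ x

/-- `φ` is finite on `S`. -/
def FiniteOn (S : Set BW) (φ : BW → ℝ≥0∞) : Prop := ∀ a ∈ S, φ a ≠ ⊤

/-- `φ` is a semifinite function on (the graph) `S`: it is not everywhere finite, and
its value at any element `a` of the cone `K⁺` is the supremum of its values at the
elements `b ≤_K a` of the cone where it is finite. -/
def SemifiniteOn (S : Set BW) (φ : BW → ℝ≥0∞) : Prop :=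
  (∃ a ∈ S, φ a = ⊤) ∧
  ∀ f : BW →₀ ℝ, NonnegOn S f →
    phiHat φ f =
      ⨆ g ∈ {g : BW →₀ ℝ |
        NonnegOn S g ∧ leK S (kmk S g) (kmk S f) ∧ phiHat φ g ≠ ⊤}, phiHat φ g

/-- A semifinite harmonic function `φ` on `S` is indecomposable if any finite or
semifinite harmonic function `φ′ ≤ φ` on `S` which does not vanish identically on the
finiteness ideal of `φ` is a constant multiple of `φ` on that ideal. -/
def IndecSemifiniteOn (S : Set BW) (φ : BW → ℝ≥0∞) : Prop :=
  ∀ φ' : BW → ℝ≥0∞, HarmonicOn S φ' →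
    (FiniteOn S φ' ∨ SemifiniteOn S φ') →
    (∀ a ∈ S, φ' a ≤ φ a) →
    (∃ a ∈ S, φ a ≠ ⊤ ∧ φ' a ≠ 0) →
    ∃ c : ℝ≥0, ∀ a ∈ S, φ a ≠ ⊤ → φ' a = (c : ℝ≥0∞) * φ a

end Kcone

end Zigzag

namespace Zigzag

/-- Vertices of the direct product graph `Z(t₁) × ⋯ × Z(t_k)`. -/
def prodV {t : Template} (D : SectionData t) : Set (Fin D.k → BW) :=
  {x | ∀ i, x i ∈ Zt (D.T i)}

/-- Edges of the direct product graph: exactly one coordinate is covered, the other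
coordinates are unchanged. -/
def prodAdj {t : Template} (D : SectionData t) (x y : Fin D.k → BW) : Prop :=
  x ∈ prodV D ∧ y ∈ prodV D ∧
    ∃ i, CoveredBy (x i) (y i) ∧ ∀ j, j ≠ i → x j = y j

/-! ### Auxiliary development for the decomposition embedding -/

section Aux

abbrev CL := List (Bool × ℕ∞)

/-- Interleave word lists: `wglue [x₀,…,x_k] [y₁,…,y_k] = x₀ ++ y₁ ++ x₁ ++ ⋯`. -/
def wglue : List BW → List BW → BW
  | [], _ => []
  | x :: _, [] => x
  | x :: xs, y :: ys => x ++ y ++ wglue xs ys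

/-- Interleave cluster lists. -/
def inter : List CL → List CL → CL
  | [], _ => []
  | A :: _, [] => A
  | A :: As, T :: Ts => A ++ T ++ inter As Ts

/-- Decrement cluster `r` of the `j`-th cluster list. -/
def dec2 : List CL → ℕ → ℕ → List CL
  | [], _, _ => []
  | A :: As, 0, r => decAt A r :: As
  | A :: As, j+1, r => A :: dec2 As j r

@[simp] lemma dec2_length (As : List CL) (j r : ℕ) : (dec2 As j r).length = As.length := by
  induction As generalizing j with
  | nil => rfl
  | cons A As ih =>
      cases j with
      | zero => simp [dec2, decAt]
      | succ j => simp [dec2, ih]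

lemma clWord_append (u v : CL) (N : ℕ) : clWord (u ++ v) N = clWord u N ++ clWord v N := by
  simp [clWord]

lemma clWord_mono {N M : ℕ} (h : N ≤ M) (cs : CL) : (clWord cs N).Sublist (clWord cs M) := by
  induction cs with
  | nil => simp [clWord]
  | cons c cs ih =>
      have : clWord (c :: cs) N = List.replicate (if c.2 = ⊤ then N else c.2.toNat) c.1
          ++ clWord cs N := by simp [clWord]
      rw [this]
      have : clWord (c :: cs) M = List.replicate (if c.2 = ⊤ then M else c.2.toNat) c.1
          ++ clWord cs M := by simp [clWord]
      rw [this]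
      refine List.Sublist.append ?_ ih
      apply (List.replicate_sublist_replicate c.1).mpr
      split <;> omega

lemma fw_sub_clWord (A : CL) (N : ℕ) : (flangeWord A).Sublist (clWord A N) := by
  induction A with
  | nil => simp [flangeWord, clWord]
  | cons c cs ih =>
      have h1 : flangeWord (c :: cs) = List.replicate c.2.toNat c.1 ++ flangeWord cs := by
        simp [flangeWord]
      have h2 : clWord (c :: cs) N = List.replicate (if c.2 = ⊤ then N else c.2.toNat) c.1
          ++ clWord cs N := by simp [clWord]
      rw [h1, h2]
      refine List.Sublist.append ?_ ih
      apply (List.replicate_sublist_replicate c.1).mpr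
      split
      · next h => simp [h]
      · exact le_rfl
  
lemma Zcl_down {a b : BW} {cs : CL} (hab : a.Sublist b) (hb : b ∈ Zcl cs) : a ∈ Zcl cs := by
  obtain ⟨N, hN⟩ := hb
  exact ⟨N, hab.trans hN⟩

lemma Jt_down {a b : BW} {t : Template} (hab : a.Sublist b) (hb : b ∈ Jt t) : a ∈ Jt t := by
  obtain ⟨p, hp, hz⟩ := hb
  exact ⟨p, hp, Zcl_down hab hz⟩

lemma fw_cons (s : Bool) (m : ℕ∞) (A : CL) :
    flangeWord ((s, m) :: A) = List.replicate m.toNat s ++ flangeWord A := by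
  simp [flangeWord]

@[simp] lemma decAt_cons_zero (s : Bool) (m : ℕ∞) (A : CL) :
    decAt ((s, m) :: A) 0 = (s, m - 1) :: A := by
  simp [decAt]

@[simp] lemma decAt_cons_succ (c : Bool × ℕ∞) (A : CL) (r : ℕ) :
    decAt (c :: A) (r + 1) = c :: decAt A r := by
  simp [decAt]

lemma toNat_sub_one (m : ℕ∞) : (m - 1).toNat = m.toNat - 1 :=
  ENat.toNat_sub (by simp) m

lemma fw_cons_dec (s : Bool) (m : ℕ∞) (A : CL) (h0 : m ≠ 0) (ht : m ≠ ⊤) :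
    flangeWord ((s, m) :: A) = s :: flangeWord ((s, m - 1) :: A) := by
  rw [fw_cons, fw_cons, toNat_sub_one]
  have h1 : m.toNat ≠ 0 := by
    simp only [ne_eq, ENat.toNat_eq_zero]
    tauto
  obtain ⟨n, hn⟩ := Nat.exists_eq_succ_of_ne_zero h1
  rw [hn]
  simp [List.replicate_succ]

lemma getD_middle (U : CL) (c : Bool × ℕ∞) (V : CL) :
    (U ++ c :: V).getD U.length (true, 1) = c := by
  rw [List.getD_append_right _ _ _ _ le_rfl]; simp [List.getD]

lemma set_middle (U : CL) (c x : Bool × ℕ∞) (V : CL) :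
    (U ++ c :: V).set U.length x = U ++ x :: V := by
  simp [List.set_append]

lemma decAt_middle (U : CL) (c : Bool × ℕ∞) (V : CL) :
    decAt (U ++ c :: V) U.length = U ++ (c.1, c.2 - 1) :: V := by
  rw [decAt, getD_middle, set_middle]

end Aux

/-! Erasing a symbol from a flange word. -/

lemma replicate_eraseIdx (s : Bool) (n q : ℕ) (hq : q < n) :
    (List.replicate n s).eraseIdx q = List.replicate (n - 1) s := by
  apply List.eq_replicate_iff.mpr
  constructor
  · rw [List.length_eraseIdx]; simp [hq]
  · intro b hb
    have := (List.eraseIdx_sublist (List.replicate n s) q).mem hb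
    exact List.eq_of_mem_replicate this

lemma fw_eraseIdx (A : CL) (q : ℕ) (hq : q < (flangeWord A).length) :
    ∃ r < A.length, (flangeWord A).eraseIdx q = flangeWord (decAt A r) := by
  induction A generalizing q with
  | nil => simp [flangeWord] at hq
  | cons c cs ih =>
      obtain ⟨s, m⟩ := c
      rw [fw_cons] at hq ⊢
      simp only [List.length_append, List.length_replicate] at hq
      by_cases h : q < m.toNat
      · refine ⟨0, by simp, ?_⟩
        rw [List.eraseIdx_append_of_lt_length (by simpa using h), replicate_eraseIdx s _ _ h,
          decAt_cons_zero, fw_cons, toNat_sub_one]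
      · push_neg at h
        obtain ⟨r, hr, hr2⟩ := ih (q - m.toNat) (by omega)
        refine ⟨r + 1, by simpa using hr, ?_⟩
        rw [List.eraseIdx_append_of_length_le (by simpa using h), decAt_cons_succ, fw_cons]
        simp only [List.length_replicate]
        rw [hr2]

lemma sublist_eraseIdx {l w : BW} (h : l.Sublist w) (hlt : l.length < w.length) :
    ∃ q < w.length, l.Sublist (w.eraseIdx q) := by
  induction h with
  | slnil => simp at hlt
  | @cons l' w' b h ih =>
      exact ⟨0, by simp, by simpa using h⟩
  | @cons_cons l' w' b h ih =>
      have : l'.length < w'.length := by simpa using hlt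
      obtain ⟨q, hq, hq2⟩ := ih this
      exact ⟨q + 1, by simpa using hq, by simpa [List.eraseIdx] using hq2.cons₂ b⟩

/-! Basic properties of `wglue` and `inter`. -/

lemma wglue_length (xs ys : List BW) (h : xs.length = ys.length + 1) :
    (wglue xs ys).length = (xs.map List.length).sum + (ys.map List.length).sum := by
  induction ys generalizing xs with
  | nil =>
      obtain ⟨x, xs', hx⟩ : ∃ x xs', xs = x :: xs' := by
        cases xs with
        | nil => simp at h
        | cons a l => exact ⟨a, l, rfl⟩
      subst hx
      have : xs' = [] := by simpa using h
      subst this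
      simp [wglue]
  | cons y ys ih =>
      obtain ⟨x, xs', hx⟩ : ∃ x xs', xs = x :: xs' := by
        cases xs with
        | nil => simp at h
        | cons a l => exact ⟨a, l, rfl⟩
      subst hx
      simp only [wglue, List.length_append, List.map_cons, List.sum_cons]
      rw [ih xs' (by simpa using h)]
      ring

lemma wglue_sublist {xs xs' ys ys' : List BW} (h1 : List.Forall₂ List.Sublist xs xs')
    (h2 : List.Forall₂ List.Sublist ys ys') :
    (wglue xs ys).Sublist (wglue xs' ys') := by
  induction h1 generalizing ys ys' with
  | nil => simp [wglue]
  | @cons x x' xs xs' hx hxs ih =>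
      cases h2 with
      | nil => simpa [wglue] using hx
      | @cons y y' ys ys' hy hys =>
          simpa [wglue] using (hx.append hy).append (ih hys)

lemma sublist_wglue_split {a : BW} {xs ys : List BW} (hlen : xs.length = ys.length + 1)
    (h : a.Sublist (wglue xs ys)) :
    ∃ xs' ys', List.Forall₂ List.Sublist xs' xs ∧ List.Forall₂ List.Sublist ys' ys ∧
      a = wglue xs' ys' := by
  induction ys generalizing a xs with
  | nil =>
      obtain ⟨x, xs', rfl⟩ : ∃ x xs', xs = x :: xs' := by
        cases xs with
        | nil => simp at hlen
        | cons a l => exact ⟨a, l, rfl⟩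
      have : xs' = [] := by simpa using hlen
      subst this
      exact ⟨[a], [], by simpa [wglue] using h, List.Forall₂.nil, rfl⟩
  | cons y ys ih =>
      obtain ⟨x, xs', rfl⟩ : ∃ x xs', xs = x :: xs' := by
        cases xs with
        | nil => simp at hlen
        | cons a l => exact ⟨a, l, rfl⟩
      have h' : a.Sublist (x ++ (y ++ wglue xs' ys)) := by
        simpa [wglue, List.append_assoc] using h
      obtain ⟨a1, a2, rfl, ha1, ha2⟩ := List.sublist_append_iff.mp h'
      obtain ⟨b1, b2, rfl, hb1, hb2⟩ := List.sublist_append_iff.mp ha2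
      obtain ⟨xs'', ys'', hxs, hys, rfl⟩ := ih (by simpa using hlen) hb2
      exact ⟨a1 :: xs'', b1 :: ys'', List.Forall₂.cons ha1 hxs, List.Forall₂.cons hb1 hys,
        by simp [wglue, List.append_assoc]⟩

lemma wglue_mem (As Ts : List CL) (xs ys : List BW)
    (hlen : As.length = Ts.length + 1)
    (hx : List.Forall₂ (fun x A => x.Sublist (flangeWord A)) xs As)
    (hy : List.Forall₂ (· ∈ Zcl ·) ys Ts) :
    ∃ N, (wglue xs ys).Sublist (clWord (inter As Ts) N) := by
  induction hx generalizing ys Ts with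
  | nil => exact ⟨0, by simp [wglue, inter, clWord]⟩
  | @cons x A xs As hxA hxs ih =>
      cases hy with
      | nil =>
          have hAs : As = [] := by simpa using hlen
          subst hAs
          exact ⟨0, by simpa [wglue, inter] using hxA.trans (fw_sub_clWord A 0)⟩
      | @cons y T ys Ts hyT hys =>
          obtain ⟨N1, hN1⟩ := hyT
          obtain ⟨N2, hN2⟩ := ih Ts ys (by simpa using hlen) hys
          refine ⟨max N1 N2, ?_⟩
          simp only [wglue, inter, clWord_append]
          refine List.Sublist.append (List.Sublist.append ?_ ?_) ?_
          · exact (hxA.trans (fw_sub_clWord A _))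
          · exact hN1.trans (clWord_mono (le_max_left _ _) _)
          · exact hN2.trans (clWord_mono (le_max_right _ _) _)

lemma mem_inter (As Ts : List CL) (hlen : As.length = Ts.length + 1) :
    ∀ A ∈ As, ∀ c ∈ A, c ∈ inter As Ts := by
  induction As generalizing Ts with
  | nil => simp
  | cons A As ih =>
      intro B hB c hc
      cases Ts with
      | nil =>
          have : As = [] := by simpa using hlen
          subst this
          simp at hB
          subst hB
          simpa [inter] using hc
      | cons T Ts =>
          simp only [List.mem_cons] at hB
          rcases hB with rfl | hB
          · simp [inter, hc]
          · have := ih Ts (by simpa using hlen) B hB c hc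
            simp only [inter, List.mem_append]
            tauto

/-! Bridges between `ofFn`-families and list interleavings. -/

lemma forall2_ofFn {α β : Type*} {R : α → β → Prop} {k : ℕ} {f : Fin k → α} {g : Fin k → β}
    (h : ∀ i, R (f i) (g i)) : List.Forall₂ R (List.ofFn f) (List.ofFn g) := by
  rw [List.forall₂_iff_get]
  refine ⟨by simp, fun i h1 h2 => ?_⟩
  simp only [List.get_eq_getElem, List.getElem_ofFn]
  exact h _

lemma getD_ofFn {k : ℕ} (f : Fin k → CL) (j : ℕ) (h : j < k) :
    (List.ofFn f).getD j [] = f ⟨j, h⟩ := by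
  rw [List.getD_eq_getElem _ _ (by simpa using h)]; simp

lemma inter_ofFn : ∀ (k : ℕ) (g : Fin (k+1) → CL) (Tc : Fin k → CL),
    inter (List.ofFn g) (List.ofFn Tc)
      = g 0 ++ (List.ofFn fun i => Tc i ++ g i.succ).flatten := by
  intro k
  induction k with
  | zero => intro g Tc; simp [List.ofFn_succ, inter]
  | succ k ih =>
      intro g Tc
      rw [List.ofFn_succ (f := g), List.ofFn_succ (f := Tc),
        List.ofFn_succ (f := fun i : Fin (k+1) => Tc i ++ g i.succ)]
      show g 0 ++ Tc 0 ++ inter (List.ofFn fun i => g i.succ) (List.ofFn fun i => Tc i.succ) = _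
      rw [ih (fun i => g i.succ) (fun i => Tc i.succ)]
      simp [List.append_assoc]

lemma wglue_ofFn : ∀ (k : ℕ) (gw : Fin (k+1) → BW) (h : Fin k → BW),
    wglue (List.ofFn gw) (List.ofFn h)
      = gw 0 ++ (List.ofFn fun i => h i ++ gw i.succ).flatten := by
  intro k
  induction k with
  | zero => intro gw h; simp [List.ofFn_succ, wglue]
  | succ k ih =>
      intro gw h
      rw [List.ofFn_succ (f := gw), List.ofFn_succ (f := h),
        List.ofFn_succ (f := fun i : Fin (k+1) => h i ++ gw i.succ)]
      show gw 0 ++ h 0 ++ wglue (List.ofFn fun i => gw i.succ) (List.ofFn fun i => h i.succ) = _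
      rw [ih (fun i => gw i.succ) (fun i => h i.succ)]
      simp [List.append_assoc]

lemma clusters_eq_inter {t : Template} (D : SectionData t) :
    t.clusters = inter (List.ofFn D.A) (List.ofFn fun i => (D.T i).clusters) := by
  rw [inter_ofFn]
  exact D.concat

lemma assemble_eq_wglue {t : Template} (D : SectionData t) (ℓ : Fin D.k → BW) :
    assemble D ℓ = wglue ((List.ofFn D.A).map flangeWord) (List.ofFn ℓ) := by
  rw [List.map_ofFn, wglue_ofFn]
  rfl

/-! Splitting the interleaving after a decrement. -/

lemma inter_dec2_split : ∀ (As Ts : List CL) (j r : ℕ), As.length = Ts.length + 1 →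
    j < As.length → r < (As.getD j []).length →
    ∃ U P c Q V, As.getD j [] = P ++ c :: Q ∧ P.length = r ∧
      inter As Ts = U ++ (P ++ c :: Q) ++ V ∧
      inter (dec2 As j r) Ts = U ++ (P ++ (c.1, c.2 - 1) :: Q) ++ V ∧
      (j = 0 → U = []) ∧ (j = Ts.length → V = []) := by
  intro As
  induction As with
  | nil => intro Ts j r h hj; simp at hj
  | cons A As ih =>
      intro Ts j r hlen hj hr
      cases j with
      | zero =>
          have hgA : (A :: As).getD 0 [] = A := rfl
          rw [hgA] at hr
          have hsplit : A = A.take r ++ A[r] :: A.drop (r+1) := by simp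
          have hPlen : (A.take r).length = r := by simp [hr.le]
          have hdec : decAt A r = A.take r ++ (A[r].1, A[r].2 - 1) :: A.drop (r+1) := by
            have h' := decAt_middle (A.take r) A[r] (A.drop (r+1))
            rw [hPlen] at h'
            conv_lhs => rw [hsplit]
            exact h'
          cases Ts with
          | nil =>
              have hAs : As = [] := by simpa using hlen
              subst hAs
              exact ⟨[], A.take r, A[r], A.drop (r+1), [], by simpa using hsplit, hPlen,
                by simpa [inter] using hsplit, by simpa [inter, dec2] using hdec,
                fun _ => rfl, fun _ => rfl⟩
          | cons T Ts' =>
              refine ⟨[], A.take r, A[r], A.drop (r+1), T ++ inter As Ts',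
                by simpa using hsplit, hPlen, ?_, ?_, fun _ => rfl, fun h => by simp at h⟩
              · have h' : inter (A :: As) (T :: Ts') = A ++ (T ++ inter As Ts') := by
                  simp [inter, List.append_assoc]
                rw [h']
                conv_lhs => rw [hsplit]
                simp [List.append_assoc]
              · have h' : inter (dec2 (A :: As) 0 r) (T :: Ts')
                    = decAt A r ++ (T ++ inter As Ts') := by
                  simp [dec2, inter, List.append_assoc]
                rw [h', hdec]
                simp [List.append_assoc]
      | succ j =>
          cases Ts with
          | nil =>
              have h0 : As.length = 0 := by simpa using hlen
              have h1 : j + 1 < As.length + 1 := by simpa using hj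
              exact (by omega : False).elim
          | cons T Ts' =>
              have hg : (A :: As).getD (j+1) [] = As.getD j [] := rfl
              rw [hg] at hr
              obtain ⟨U, P, c, Q, V, h1, h2, h3, h4, h5, h6⟩ :=
                ih Ts' j r (by simpa using hlen) (by simpa using hj) hr
              refine ⟨A ++ T ++ U, P, c, Q, V, by simpa using h1, h2, ?_, ?_, ?_, ?_⟩
              · simp only [inter, List.append_assoc] at h3 ⊢
                rw [h3]
              · simp only [dec2, inter, List.append_assoc] at h4 ⊢
                rw [h4]
              · intro h; simp at h
              · intro h
                exact h6 (by simpa using h)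

/-! From a decremented-flange embedding to membership in `J(t)`. -/

lemma mem_Jt_of_dec2 {t : Template} (D : SectionData t) (j r : ℕ)
    (hj : j < D.k + 1) (hr : r < (D.A ⟨j, hj⟩).length) (a : BW)
    (ha : ∃ N, a.Sublist (clWord
      (inter (dec2 (List.ofFn D.A) j r) (List.ofFn fun i => (D.T i).clusters)) N)) :
    a ∈ Jt t := by
  set As := List.ofFn D.A with hAs
  set Ts := (List.ofFn fun i => (D.T i).clusters : List CL) with hTs
  have hlenAs : As.length = D.k + 1 := by simp [hAs]
  have hlenTs : Ts.length = D.k := by simp [hTs]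
  have hlen : As.length = Ts.length + 1 := by rw [hlenAs, hlenTs]
  have hgetD : As.getD j [] = D.A ⟨j, hj⟩ := getD_ofFn D.A j hj
  obtain ⟨U, P, c, Q, V, h1, h2, h3, h4, hU, hV⟩ :=
    inter_dec2_split As Ts j r hlen (by omega) (by rw [hgetD]; exact hr)
  have hcs : t.clusters = inter As Ts := clusters_eq_inter D
  have hform : t.clusters = (U ++ P) ++ c :: (Q ++ V) := by
    rw [hcs, h3]; simp [List.append_assoc]
  set p := (U ++ P).length with hp
  have hcmem : c ∈ D.A ⟨j, hj⟩ := by rw [← hgetD, h1]; simp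
  have hcfin : c.2 ≠ ⊤ := D.finA _ c hcmem
  have hgetc : t.clusters.getD p (true, 1) = c := by rw [hform]; exact getD_middle _ _ _
  refine ⟨p, ⟨?_, hgetc ▸ hcfin, ?_⟩, ?_⟩
  · rw [hform]; simp [hp]
  · rintro ⟨hp0, hplen, hc1, hlft, hrgt⟩
    rw [hgetc] at hc1
    cases Q with
    | cons d Q' =>
        have hd : t.clusters.getD (p + 1) (true, 1) = d := by
          have : t.clusters = ((U ++ P) ++ [c]) ++ d :: (Q' ++ V) := by
            rw [hform]; simp [List.append_assoc]
          rw [this, show p + 1 = ((U ++ P) ++ [c]).length by simp [hp]; omega]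
          exact getD_middle _ _ _
        have hdmem : d ∈ D.A ⟨j, hj⟩ := by rw [← hgetD, h1]; simp
        exact D.finA _ d hdmem (hd ▸ hrgt)
    | nil =>
        rcases List.eq_nil_or_concat P with hP | ⟨P', d, hP⟩
        · -- A_j is the singleton [c]
          subst hP
          rcases Nat.eq_zero_or_pos j with hj0 | hjpos
          · have : U = [] := hU hj0
            simp [hp, this] at hp0
          · by_cases hjk : j = Ts.length
            · have hV' : V = [] := hV hjk
              rw [hform, hV'] at hplen
              simp [hp] at hplen
            · have hne := D.interior_not_sep ⟨j, hj⟩ (by simpa using hjpos.ne')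
                (by simpa [hlenTs ▸ hjk] using fun h => hjk (by omega))
              have : D.A ⟨j, hj⟩ = [(c.1, 1)] := by
                rw [← hgetD, h1]
                simp [← hc1]
              exact hne c.1 this
        · subst hP
          have hd : t.clusters.getD (p - 1) (true, 1) = d := by
            have : t.clusters = (U ++ P') ++ d :: (c :: V) := by
              rw [hform]; simp [List.append_assoc]
            rw [this, show p - 1 = (U ++ P').length by simp [hp]]
            exact getD_middle _ _ _
          have hdmem : d ∈ D.A ⟨j, hj⟩ := by rw [← hgetD, h1]; simp
          exact D.finA _ d hdmem (hd ▸ hlft)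
  · obtain ⟨N, hN⟩ := ha
    refine ⟨N, ?_⟩
    have : decAt t.clusters p = inter (dec2 As j r) Ts := by
      rw [hform, hp, decAt_middle, h4]
      simp [List.append_assoc]
    rw [this]
    exact hN

/-! The flange words are fully used, or else the word fits after a decrement. -/

lemma flange_fill : ∀ {As : List CL} {xs : List BW},
    List.Forall₂ (fun x A => x.Sublist (flangeWord A)) xs As →
    xs = As.map flangeWord ∨ ∃ j r, j < As.length ∧ r < (As.getD j []).length ∧
      List.Forall₂ (fun x A => x.Sublist (flangeWord A)) xs (dec2 As j r) := by
  intro As xs h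
  induction h with
  | nil => left; rfl
  | @cons x A xs As hxA hxs ih =>
      by_cases hx : x = flangeWord A
      · rcases ih with h | ⟨j, r, hj, hr, hf⟩
        · left; simp [hx, h]
        · right
          exact ⟨j + 1, r, by simpa using hj, hr, List.Forall₂.cons hxA hf⟩
      · right
        have hlt : x.length < (flangeWord A).length := by
          rcases lt_or_eq_of_le hxA.length_le with h | h
          · exact h
          · exact absurd (hxA.eq_of_length h) hx
        obtain ⟨q, hq, hq2⟩ := sublist_eraseIdx hxA hlt
        obtain ⟨r, hrA, hre⟩ := fw_eraseIdx A q hq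
        exact ⟨0, r, by simp, hrA, List.Forall₂.cons (hre ▸ hq2) hxs⟩

/-! Uniqueness of the decomposition, up to a `J(t)`-style witness. -/

lemma glue_unique : ∀ (Ts As : List CL) (ls ys : List BW),
    As.length = Ts.length + 1 →
    (∀ j, 0 < j → j + 1 < As.length →
      As.getD j [] ≠ [] ∧ ∀ c ∈ As.getD j [], c.2 ≠ 0 ∧ c.2 ≠ ⊤) →
    List.Forall₂ (· ∈ Zcl ·) ls Ts → List.Forall₂ (· ∈ Zcl ·) ys Ts →
    wglue (As.map flangeWord) ls = wglue (As.map flangeWord) ys →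
    ls = ys ∨ ∃ j ls', 0 < j ∧ j + 1 < As.length ∧ List.Forall₂ (· ∈ Zcl ·) ls' Ts ∧
      wglue (As.map flangeWord) ls = wglue ((dec2 As j 0).map flangeWord) ls' := by
  intro Ts
  induction Ts with
  | nil =>
      intro As ls ys _ _ hl hy _
      cases hl; cases hy; left; rfl
  | cons T Ts ih =>
      intro As ls ys hlen hint hl hy heqw
      obtain ⟨l, ls', hlT, hls, rfl⟩ := List.forall₂_cons_right_iff.mp hl
      obtain ⟨y, ys', hyT, hys, rfl⟩ := List.forall₂_cons_right_iff.mp hy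
      obtain ⟨A, As1, rfl⟩ : ∃ A As1, As = A :: As1 := by
        cases As with
        | nil => simp at hlen
        | cons A As1 => exact ⟨A, As1, rfl⟩
      obtain ⟨A', As2, rfl⟩ : ∃ A' As2, As1 = A' :: As2 := by
        cases As1 with
        | nil => simp at hlen
        | cons A' As2 => exact ⟨A', As2, rfl⟩
      have heq' : l ++ wglue ((A' :: As2).map flangeWord) ls'
          = y ++ wglue ((A' :: As2).map flangeWord) ys' := by
        apply List.append_cancel_left (as := flangeWord A)
        simpa [wglue, List.append_assoc] using heqw
      rcases lt_trichotomy l.length y.length with hlt | heq2 | hgt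
      · -- l is shorter: absorb the head of the next flange on the `l` side
        cases Ts with
        | nil =>
            cases hls; cases hys
            have hAs2 : As2 = [] := by simpa using hlen
            subst hAs2
            have := congrArg List.length heq'
            simp [wglue] at this
            omega
        | cons T' Ts' =>
            obtain ⟨B, As3, rfl⟩ : ∃ B As3, As2 = B :: As3 := by
              cases As2 with
              | nil => simp at hlen
              | cons B As3 => exact ⟨B, As3, rfl⟩
            obtain ⟨hA'ne, hA'c⟩ := hint 1 one_pos (by simp)
            obtain ⟨c, A'rest, rfl⟩ : ∃ c rest, A' = c :: rest := by
              cases A' with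
              | nil => exact absurd rfl hA'ne
              | cons c rest => exact ⟨c, rest, rfl⟩
            obtain ⟨s₀, m⟩ := c
            obtain ⟨hm0, hmt⟩ := hA'c (s₀, m) (by simp)
            have hfw := fw_cons_dec s₀ m A'rest hm0 hmt
            obtain ⟨l₂, ls₂, hl₂T, hls₂, rfl⟩ := List.forall₂_cons_right_iff.mp hls
            have hX : wglue ((((s₀, m) :: A'rest) :: B :: As3).map flangeWord) (l₂ :: ls₂)
                = s₀ :: (flangeWord ((s₀, m - 1) :: A'rest)
                    ++ (l₂ ++ wglue ((B :: As3).map flangeWord) ls₂)) := by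
              simp [wglue, hfw, List.append_assoc]
            rw [hX] at heq'
            have hpre : l ++ [s₀]
                = (y ++ wglue ((((s₀, m) :: A'rest) :: B :: As3).map flangeWord) ys').take

                    (l.length + 1) := by
              rw [← heq', List.take_append]
              simp
            rw [List.take_append_of_le_length (by omega)] at hpre
            have hsub : (l ++ [s₀]).Sublist y := hpre ▸ List.take_sublist _ _
            have hmem : l ++ [s₀] ∈ Zcl T := Zcl_down hsub hyT
            refine Or.inr ⟨1, (l ++ [s₀]) :: l₂ :: ls₂, one_pos, by simp,
              List.Forall₂.cons hmem (List.Forall₂.cons hl₂T hls₂), ?_⟩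
            simp [dec2, wglue, hfw, List.append_assoc]
      · -- equal lengths
        obtain ⟨rfl, hXY⟩ := List.append_inj heq' heq2
        rcases ih (A' :: As2) ls' ys' (by simpa using hlen)
            (fun j hj0 hj1 => hint (j+1) (by omega) (by simpa using hj1)) hls hys hXY with
          h | ⟨j, ls'', hj0, hj1, hmem, heqd⟩
        · left; rw [h]
        · right
          refine ⟨j + 1, l :: ls'', by omega, by simpa using hj1,
            List.Forall₂.cons hlT hmem, ?_⟩
          simp only [List.map_cons] at heqd
          simp only [dec2, List.map_cons, wglue]
          rw [heqd]
      · -- y is shorter: same with the roles swapped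
        cases Ts with
        | nil =>
            cases hls; cases hys
            have hAs2 : As2 = [] := by simpa using hlen
            subst hAs2
            have := congrArg List.length heq'
            simp [wglue] at this
            omega
        | cons T' Ts' =>
            obtain ⟨B, As3, rfl⟩ : ∃ B As3, As2 = B :: As3 := by
              cases As2 with
              | nil => simp at hlen
              | cons B As3 => exact ⟨B, As3, rfl⟩
            obtain ⟨hA'ne, hA'c⟩ := hint 1 one_pos (by simp)
            obtain ⟨c, A'rest, rfl⟩ : ∃ c rest, A' = c :: rest := by
              cases A' with
              | nil => exact absurd rfl hA'ne
              | cons c rest => exact ⟨c, rest, rfl⟩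
            obtain ⟨s₀, m⟩ := c
            obtain ⟨hm0, hmt⟩ := hA'c (s₀, m) (by simp)
            have hfw := fw_cons_dec s₀ m A'rest hm0 hmt
            obtain ⟨y₂, ys₂, hy₂T, hys₂, rfl⟩ := List.forall₂_cons_right_iff.mp hys
            have hX : wglue ((((s₀, m) :: A'rest) :: B :: As3).map flangeWord) (y₂ :: ys₂)
                = s₀ :: (flangeWord ((s₀, m - 1) :: A'rest)
                    ++ (y₂ ++ wglue ((B :: As3).map flangeWord) ys₂)) := by
              simp [wglue, hfw, List.append_assoc]
            rw [hX] at heq'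
            have hpre : y ++ [s₀]
                = (l ++ wglue ((((s₀, m) :: A'rest) :: B :: As3).map flangeWord) ls').take
                    (y.length + 1) := by
              rw [heq', List.take_append]
              simp
            rw [List.take_append_of_le_length (by omega)] at hpre
            have hsub : (y ++ [s₀]).Sublist l := hpre ▸ List.take_sublist _ _
            have hmem : y ++ [s₀] ∈ Zcl T := Zcl_down hsub hlT
            refine Or.inr ⟨1, (y ++ [s₀]) :: y₂ :: ys₂, one_pos, by simp,
              List.Forall₂.cons hmem (List.Forall₂.cons hy₂T hys₂), ?_⟩
            rw [heqw]
            simp [dec2, wglue, hfw, List.append_assoc]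

/-! Assembling the pieces. -/

lemma forall2_sub_refl (l : List BW) : List.Forall₂ List.Sublist l l :=
  List.forall₂_same.mpr fun x _ => List.Sublist.refl x

lemma forall2_fw_refl (Bs : List CL) :
    List.Forall₂ (fun x A => x.Sublist (flangeWord A)) (Bs.map flangeWord) Bs := by
  induction Bs with
  | nil => exact List.Forall₂.nil
  | cons B Bs ih => exact List.Forall₂.cons (List.Sublist.refl _) ih

lemma forall2_zcl_of_sub {ys ms : List BW} {Ts : List CL}
    (h1 : List.Forall₂ List.Sublist ys ms) (h2 : List.Forall₂ (· ∈ Zcl ·) ms Ts) :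
    List.Forall₂ (· ∈ Zcl ·) ys Ts := by
  induction h1 generalizing Ts with
  | nil => cases h2; exact List.Forall₂.nil
  | @cons y m ys ms hym hrest ih =>
      cases h2 with
      | cons hmT hms => exact List.Forall₂.cons (Zcl_down hym hmT) (ih hms)

lemma interior_hyp {t : Template} (D : SectionData t) :
    ∀ j, 0 < j → j + 1 < (List.ofFn D.A).length →
      (List.ofFn D.A).getD j [] ≠ [] ∧
        ∀ c ∈ (List.ofFn D.A).getD j [], c.2 ≠ 0 ∧ c.2 ≠ ⊤ := by
  intro j hj0 hj1
  have hj1' : j + 1 < D.k + 1 := by simpa using hj1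
  have hjlt : j < D.k + 1 := by omega
  rw [getD_ofFn D.A j hjlt]
  have hne := D.interior_ne ⟨j, hjlt⟩ (by simpa using hj0.ne') (by simp; omega)
  refine ⟨hne, fun c hc => ⟨?_, D.finA _ c hc⟩⟩
  apply t.pos
  rw [clusters_eq_inter D]
  exact mem_inter _ _ (by simp) (D.A ⟨j, hjlt⟩)
    (List.mem_ofFn.mpr ⟨⟨j, hjlt⟩, rfl⟩) c hc

lemma assemble_length {t : Template} (D : SectionData t) (ℓ : Fin D.k → BW) :
    (assemble D ℓ).length
      = (((List.ofFn D.A).map flangeWord).map List.length).sum + ∑ i, (ℓ i).length := by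
  rw [assemble_eq_wglue, wglue_length _ _ (by simp)]
  congr 1
  rw [List.map_ofFn, List.sum_ofFn]
  rfl

/-- Main comparison lemma: a sublist relation between two decomposed words not in
`J(t)` (for the smaller one) descends to the section components. -/
lemma sub_decomp {t : Template} (D : SectionData t) {a b : BW} (haJ : a ∉ Jt t)
    (ℓa ℓb : Fin D.k → BW) (hma : ∀ i, ℓa i ∈ Zt (D.T i)) (hmb : ∀ i, ℓb i ∈ Zt (D.T i))
    (ha : a = assemble D ℓa) (hb : b = assemble D ℓb) (hab : a.Sublist b) :
    ∀ i : Fin D.k, (ℓa i).Sublist (ℓb i) := by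
  classical
  set As := List.ofFn D.A with hAsdef
  set Ts := (List.ofFn fun i => (D.T i).clusters : List CL) with hTsdef
  have hlen : As.length = Ts.length + 1 := by simp [hAsdef, hTsdef]
  have hFa : List.Forall₂ (· ∈ Zcl ·) (List.ofFn ℓa) Ts := forall2_ofFn fun i => hma i
  have hFb : List.Forall₂ (· ∈ Zcl ·) (List.ofFn ℓb) Ts := forall2_ofFn fun i => hmb i
  rw [ha, hb, assemble_eq_wglue, assemble_eq_wglue] at hab
  obtain ⟨xs, ys, hxs, hys, haeq⟩ :=
    sublist_wglue_split (by simp [hAsdef]) hab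
  have hxs' : List.Forall₂ (fun x A => x.Sublist (flangeWord A)) xs As :=
    List.forall₂_map_right_iff.mp hxs
  have hFys : List.Forall₂ (· ∈ Zcl ·) ys Ts := forall2_zcl_of_sub hys hFb
  have haw : a = wglue xs ys := by rw [ha, assemble_eq_wglue, haeq]
  rcases flange_fill hxs' with hfull | ⟨j, r, hj, hr, hf⟩
  · -- the flange is fully used: apply uniqueness
    have ha2 : wglue (As.map flangeWord) (List.ofFn ℓa) = wglue (As.map flangeWord) ys := by
      rw [← assemble_eq_wglue, ← ha, haw, hfull]
    rcases glue_unique Ts As (List.ofFn ℓa) ys hlen (interior_hyp D) hFa hFys ha2 with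
      heq | ⟨j, ls', hj0, hj1, hmem', heqw⟩
    · -- conclusion
      intro i
      have h := hys
      rw [← heq] at h
      rw [List.forall₂_iff_get] at h
      have := h.2 i (by simp) (by simp)
      simpa using this
    · exfalso
      apply haJ
      have hj' : j < D.k + 1 := by
        have : As.length = D.k + 1 := by simp [hAsdef]
        omega
      apply mem_Jt_of_dec2 D j 0 hj'
      · rw [← getD_ofFn D.A j hj']
        have := (interior_hyp D j hj0 (by simpa [hAsdef] using hj1)).1
        rw [getD_ofFn D.A j hj'] at this ⊢
        exact List.length_pos_iff.mpr this
      · refine (wglue_mem (dec2 As j 0) Ts ((dec2 As j 0).map flangeWord) ls'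
          (by simpa using hlen) (forall2_fw_refl _) hmem').imp fun N hN => ?_
        rw [ha, assemble_eq_wglue, heqw]
        exact hN
  · exfalso
    apply haJ
    have hj' : j < D.k + 1 := by
      have : As.length = D.k + 1 := by simp [hAsdef]
      omega
    apply mem_Jt_of_dec2 D j r hj'
    · rw [← getD_ofFn D.A j hj']
      exact hr
    · refine (wglue_mem (dec2 As j r) Ts xs ys (by simpa using hlen) hf hFys).imp
        fun N hN => ?_
      rw [haw]
      exact hN


/-- Lemma 3.10 (2) of the paper.  The map
`λ ↦ (λ^{(1)}, …, λ^{(k)})` given by the unique decomposition along the sections is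
an embedding of graded graphs `Z(t) ∖ J(t) → Z(t₁) × ⋯ × Z(t_k)` whose image is an
ideal of the direct product graph. -/
theorem decomposition_embedding (t : Template) (hsf : ¬t.IsFiniteTemplate)
    (D : SectionData t) :
    -- injectivity and preservation of edges in both directions
    (∀ a b : BW, a ∈ Zt t → a ∉ Jt t → b ∈ Zt t → b ∉ Jt t →
      ∀ ℓa ℓb : Fin D.k → BW, decompOf D a ℓa → decompOf D b ℓb →
        (a = b ↔ ℓa = ℓb) ∧ (CoveredBy a b ↔ prodAdj D ℓa ℓb)) ∧
    -- the image is an ideal of the direct product graph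
    (∀ a : BW, a ∈ Zt t → a ∉ Jt t → ∀ ℓa : Fin D.k → BW, decompOf D a ℓa →
      ∀ y : Fin D.k → BW, Relation.ReflTransGen (prodAdj D) ℓa y →
        ∃ b : BW, b ∈ Zt t ∧ b ∉ Jt t ∧ decompOf D b y) := by
  classical
  have key : ∀ a b : BW, a ∉ Jt t → ∀ ℓa ℓb : Fin D.k → BW,
      decompOf D a ℓa → decompOf D b ℓb → a.Sublist b →
      ∀ i : Fin D.k, (ℓa i).Sublist (ℓb i) := by
    intro a b haJ ℓa ℓb hda hdb hab
    exact sub_decomp D haJ ℓa ℓb hda.1 hdb.1 hda.2 hdb.2 hab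
  constructor
  · intro a b haZ haJ hbZ hbJ ℓa ℓb hda hdb
    constructor
    · constructor
      · intro hab
        have h1 := key a b haJ ℓa ℓb hda hdb (hab ▸ List.Sublist.refl a)
        have h2 := key b a hbJ ℓb ℓa hdb hda (hab ▸ List.Sublist.refl a)
        funext i
        exact (h1 i).antisymm (h2 i)
      · rintro rfl
        rw [hda.2, hdb.2]
    · constructor
      · rintro ⟨hsub, hlen⟩
        have h1 := key a b haJ ℓa ℓb hda hdb hsub
        have hsum : ∑ i, (ℓb i).length = ∑ i, (ℓa i).length + 1 := by
          have la := assemble_length D ℓa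
          have lb := assemble_length D ℓb
          rw [← hda.2] at la
          rw [← hdb.2] at lb
          omega
        have hle : ∀ i, (ℓa i).length ≤ (ℓb i).length := fun i => (h1 i).length_le
        have hdiff : ∑ i, ((ℓb i).length - (ℓa i).length) = 1 := by
          have h2 : ∑ i, (ℓb i).length
              = ∑ i, (ℓa i).length + ∑ i, ((ℓb i).length - (ℓa i).length) := by
            rw [← Finset.sum_add_distrib]
            exact Finset.sum_congr rfl fun i _ => by have := hle i; omega
          omega
        have hex : ∃ i, (ℓb i).length - (ℓa i).length ≠ 0 := by
          by_contra h
          push_neg at h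
          rw [Finset.sum_eq_zero fun i _ => h i] at hdiff
          omega
        obtain ⟨i₀, hi₀⟩ := hex
        have hsplit : ((ℓb i₀).length - (ℓa i₀).length)
              + ∑ x ∈ Finset.univ.erase i₀, ((ℓb x).length - (ℓa x).length)
            = ∑ i, ((ℓb i).length - (ℓa i).length) :=
          Finset.add_sum_erase Finset.univ
            (fun i => (ℓb i).length - (ℓa i).length) (Finset.mem_univ i₀)
        have hzer : ∑ x ∈ Finset.univ.erase i₀, ((ℓb x).length - (ℓa x).length) = 0 := by
          omega
        have hothers : ∀ jj, jj ≠ i₀ → ℓa jj = ℓb jj := by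
          intro jj hjj
          have h0 := Finset.sum_eq_zero_iff.mp hzer jj
            (Finset.mem_erase.mpr ⟨hjj, Finset.mem_univ jj⟩)
          have := hle jj
          exact (h1 jj).eq_of_length (by omega)
        refine ⟨fun i => hda.1 i, fun i => hdb.1 i, i₀, ⟨h1 i₀, by omega⟩, hothers⟩
      · rintro ⟨hva, hvb, i₀, hcov, heqo⟩
        constructor
        · rw [hda.2, hdb.2, assemble_eq_wglue, assemble_eq_wglue]
          refine wglue_sublist (forall2_sub_refl _) (forall2_ofFn fun i => ?_)
          by_cases h : i = i₀
          · subst h; exact hcov.1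
          · rw [heqo i h]
        · rw [hda.2, hdb.2, assemble_length, assemble_length]
          have h3 : ∑ x ∈ Finset.univ.erase i₀, (ℓb x).length
              = ∑ x ∈ Finset.univ.erase i₀, (ℓa x).length :=
            Finset.sum_congr rfl fun j hj => by rw [heqo j (Finset.mem_erase.mp hj).1]
          have h4 : (ℓb i₀).length = (ℓa i₀).length + 1 := hcov.2
          have h5 : (ℓb i₀).length + ∑ x ∈ Finset.univ.erase i₀, (ℓb x).length
              = ∑ i, (ℓb i).length :=
            Finset.add_sum_erase Finset.univ (fun i => (ℓb i).length) (Finset.mem_univ i₀)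
          have h6 : (ℓa i₀).length + ∑ x ∈ Finset.univ.erase i₀, (ℓa x).length
              = ∑ i, (ℓa i).length :=
            Finset.add_sum_erase Finset.univ (fun i => (ℓa i).length) (Finset.mem_univ i₀)
          omega
  · intro a haZ haJ ℓa hda y hreach
    induction hreach with
    | refl => exact ⟨a, haZ, haJ, hda⟩
    | @tail y' y hst hadj ih =>
        obtain ⟨b', hbZ, hbJ, hdb'⟩ := ih
        obtain ⟨hv1, hv2, i₀, hcov, heqo⟩ := hadj
        have hsubw : b'.Sublist (assemble D y) := by
          rw [hdb'.2, assemble_eq_wglue, assemble_eq_wglue]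
          refine wglue_sublist (forall2_sub_refl _) (forall2_ofFn fun i => ?_)
          by_cases h : i = i₀
          · subst h; exact hcov.1
          · rw [heqo i h]
        refine ⟨assemble D y, ?_, ?_, fun i => hv2 i, rfl⟩
        · obtain ⟨N, hN⟩ := wglue_mem (List.ofFn D.A)
            (List.ofFn fun i => (D.T i).clusters) ((List.ofFn D.A).map flangeWord)
            (List.ofFn y) (by simp) (forall2_fw_refl _) (forall2_ofFn fun i => hv2 i)
          refine ⟨N, ?_⟩
          rw [clusters_eq_inter D, assemble_eq_wglue]
          exact hN
        · intro hmem
          exact hbJ (Jt_down hsubw hmem)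


end Zigzag
end

section
/- Let w be a finitary oriented paintbox with intervals ((ε₁,w₁), …, (ε_m,w_m)) and define φ_w(λ) = F_λ(w) for every zigzag λ. Then φ_w(λ) > 0 if and only if λ ∈ Z(t_w); that is, the support of φ_w equals Z(t_w). -/
/-!
Common definitions: the zigzag graph on binary words, templates and their coideals,
zigzag flanges and sections, the functions `F_λ(u)` and `φ_{t,w}`, and harmonic /
semifinite / indecomposable functions on subgraphs of the zigzag graph.
-/

open scoped ENNReal NNReal

namespace Zigzag

/-- The template `t_w` of a finitary oriented paintbox: replace each interval by an
infinite cluster of its sign and insert a one-symbol cluster of the opposite sign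
between any two adjacent infinite clusters of equal sign. -/
def tuClusters : List (Bool × ℝ) → List (Bool × ℕ∞)
  | [] => []
  | [(s, _)] => [(s, ⊤)]
  | (s, _) :: (s', x) :: rest =>
      if s = s' then (s, ⊤) :: (!s, 1) :: tuClusters ((s', x) :: rest)
      else (s, ⊤) :: tuClusters ((s', x) :: rest)

/-! ### Auxiliary machinery for Statement 8 -/

/-- The inductive description of words admitting a decomposition along signs. -/
inductive Good : List Bool → BW → Prop
  | all (s : Bool) (ss : List Bool) (k : ℕ) : Good (s :: ss) (List.replicate k s)
  | skip {ss : List Bool} {a : BW} (s : Bool) : Good ss a → Good (s :: ss) a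
  | step {ss : List Bool} {a : BW} (s : Bool) (k : ℕ) (x : Bool) :
      Good ss a → Good (s :: ss) (List.replicate k s ++ x :: a)

/-- The separator inserted between two adjacent intervals of signs `s` and head of `r`. -/
def sepHead (s : Bool) : List Bool → BW
  | [] => []
  | s' :: _ => if s = s' then [!s] else []

/-- The instantiated word of the template of a paintbox with given signs. -/
def patWord : List Bool → ℕ → BW
  | [], _ => []
  | s :: r, N => List.replicate N s ++ (sepHead s r ++ patWord r N)

lemma clWord_tuClusters (w : List (Bool × ℝ)) (N : ℕ) :
    clWord (tuClusters w) N = patWord (w.map Prod.fst) N := by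
  induction w with
  | nil => rfl
  | cons p r ih =>
      obtain ⟨s, x⟩ := p
      cases r with
      | nil => simp [tuClusters, clWord, patWord, sepHead]
      | cons q r' =>
          obtain ⟨s', y⟩ := q
          have he : tuClusters ((s, x) :: (s', y) :: r')
              = if s = s' then (s, ⊤) :: (!s, 1) :: tuClusters ((s', y) :: r')
                else (s, ⊤) :: tuClusters ((s', y) :: r') := rfl
          by_cases h : s = s'
          · rw [he, if_pos h]
            simp only [clWord, List.map_cons, List.flatten_cons] at ih ⊢
            rw [ih]
            simp [patWord, sepHead, h]
          · rw [he, if_neg h]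
            simp only [clWord, List.map_cons, List.flatten_cons] at ih ⊢
            rw [ih]
            simp [patWord, sepHead, h]

lemma patWord_mono {ss : List Bool} {N M : ℕ} (h : N ≤ M) :
    (patWord ss N).Sublist (patWord ss M) := by
  induction ss with
  | nil => simp [patWord]
  | cons s r ih =>
      exact ((List.replicate_sublist_replicate s).2 h).append
        ((List.Sublist.refl _).append ih)

lemma cons_patWord {s : Bool} {r : List Bool} {N : ℕ} :
    (s :: patWord (s :: r) N).Sublist (patWord (s :: r) (N + 1)) := by
  show (s :: (List.replicate N s ++ _)).Sublist (List.replicate (N+1) s ++ _)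
  rw [List.replicate_succ, List.cons_append]
  exact List.Sublist.cons₂ _ ((List.Sublist.refl _).append
    ((List.Sublist.refl _).append (patWord_mono (Nat.le_succ N))))

lemma Good.ne_nil {ss : List Bool} {a : BW} (h : Good ss a) : ss ≠ [] := by
  cases h <;> simp

lemma good_to_pat {ss : List Bool} {a : BW} (h : Good ss a) :
    ∃ N, a.Sublist (patWord ss N) := by
  induction h with
  | all s ss k =>
      exact ⟨k, by simpa [patWord] using
        List.sublist_append_left (List.replicate k s) _⟩
  | skip s h ih =>
      obtain ⟨N, hN⟩ := ih
      exact ⟨N, hN.trans ((List.sublist_append_right _ _).trans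
        (List.sublist_append_right _ _))⟩
  | step s k x h ih =>
      rename_i ss a
      obtain ⟨N, hN⟩ := ih
      obtain ⟨s', r, rfl⟩ : ∃ s' r, ss = s' :: r := by
        cases ss with
        | nil => exact absurd rfl h.ne_nil
        | cons s' r => exact ⟨s', r, rfl⟩
      refine ⟨max (k + 1) (N + 1), ?_⟩
      show (List.replicate k s ++ x :: a).Sublist
        (List.replicate (max (k + 1) (N + 1)) s ++
          (sepHead s (s' :: r) ++ patWord (s' :: r) (max (k + 1) (N + 1))))
      have hpm : (patWord (s' :: r) N).Sublist
          (patWord (s' :: r) (max (k + 1) (N + 1))) :=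
        patWord_mono (by omega)
      by_cases hxs' : x = s'
      · subst hxs'
        refine List.Sublist.append
          ((List.replicate_sublist_replicate s).2 (by omega)) ?_
        refine ((List.Sublist.cons₂ x hN).trans ?_).trans
          (List.sublist_append_right _ _)
        exact cons_patWord.trans (patWord_mono (by omega))
      · by_cases hxs : x = s
        · subst hxs
          have : List.replicate k x ++ x :: a
              = List.replicate (k + 1) x ++ a := by
            rw [List.replicate_succ', List.append_assoc, List.singleton_append]
          rw [this]
          exact List.Sublist.append
            ((List.replicate_sublist_replicate x).2 (by omega))
            ((hN.trans hpm).trans (List.sublist_append_right _ _))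
        · have hss' : s = s' := by
            cases x <;> cases s <;> cases s' <;> simp_all
          have hx : x = !s := by cases x <;> cases s <;> simp_all
          subst hss' hx
          refine List.Sublist.append
            ((List.replicate_sublist_replicate s).2 (by omega)) ?_
          rw [show sepHead s (s :: r) = [!s] by simp [sepHead]]
          exact List.Sublist.cons₂ _ (hN.trans hpm)

lemma Good.absorb {r : List Bool} {b : BW} (s : Bool) (k : ℕ) (h : Good r b) :
    Good (s :: r) (List.replicate k s ++ b) := by
  cases k with
  | zero => simpa using h.skip s
  | succ k' =>
      rw [List.replicate_succ', List.append_assoc, List.singleton_append]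
      exact h.step s k' s

lemma pat_to_good : ∀ (ss : List Bool), ss ≠ [] → ∀ (N : ℕ) (a : BW),
    a.Sublist (patWord ss N) → Good ss a := by
  intro ss
  induction ss with
  | nil => simp
  | cons s r ih =>
      intro _ N a ha
      rw [patWord, List.sublist_append_iff] at ha
      obtain ⟨a₁, a₂, rfl, h₁, h₂⟩ := ha
      obtain ⟨k, -, rfl⟩ := List.sublist_replicate_iff.mp h₁
      rw [List.sublist_append_iff] at h₂
      obtain ⟨b₁, b₂, rfl, hb₁, hb₂⟩ := h₂
      cases r with
      | nil =>
          simp only [sepHead, patWord, List.sublist_nil] at hb₁ hb₂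
          subst hb₁; subst hb₂
          simpa using Good.all s [] k
      | cons s' r' =>
          have hg : Good (s' :: r') b₂ := ih (by simp) N b₂ hb₂
          by_cases hss : s = s'
          · rw [sepHead, if_pos hss] at hb₁
            rcases List.sublist_singleton.mp hb₁ with rfl | rfl
            · simpa using Good.absorb s k hg
            · rw [List.singleton_append]
              exact hg.step s k (!s)
          · rw [sepHead, if_neg hss, List.sublist_nil] at hb₁
            subst hb₁
            simpa using Good.absorb s k hg

/-- The decomposition condition appearing in `Fword`. -/
def Cond (u : List (Bool × ℝ)) (a : BW) (c : Fin u.length → ℕ) : Prop :=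
  ∀ i : Fin u.length,
    (a.drop (∑ i' ∈ Finset.univ.filter (· < i), c i')).take (c i - 1)
      = List.replicate (c i - 1) (u.get i).1

lemma sum_filter_lt_zero {m : ℕ} (c : Fin (m + 1) → ℕ) :
    ∑ i' ∈ Finset.univ.filter (· < (0 : Fin (m + 1))), c i' = 0 := by
  rw [Finset.filter_eq_empty_iff.2 (by simp), Finset.sum_empty]

lemma sum_filter_lt_succ {m : ℕ} (c : Fin (m + 1) → ℕ) (j : Fin m) :
    ∑ i' ∈ Finset.univ.filter (· < j.succ), c i'
      = c 0 + ∑ i' ∈ Finset.univ.filter (· < j), c i'.succ := by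
  rw [Finset.sum_filter, Finset.sum_filter, Fin.sum_univ_succ]
  congr 1
  · simp [Fin.succ_pos]

lemma exists_cond_iff_good : ∀ (u : List (Bool × ℝ)) (a : BW),
    (∃ c : Fin u.length → ℕ, (∑ i, c i = a.length + 1) ∧ Cond u a c)
      ↔ Good (u.map Prod.fst) a := by
  intro u
  induction u with
  | nil =>
      intro a
      constructor
      · rintro ⟨c, hsum, -⟩
        have h0 : (0 : ℕ) = a.length + 1 := by simpa using hsum
        omega
      · intro h
        exact absurd rfl h.ne_nil
  | cons p u' ih =>
      obtain ⟨s, v⟩ := p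
      intro a
      simp only [Cond, List.length_cons] at ih ⊢
      constructor
      · rintro ⟨c, hsum, hcond⟩
        set k := c 0 with hk
        have hsum' : k + ∑ i : Fin u'.length, c i.succ = a.length + 1 := by
          rw [← hsum, Fin.sum_univ_succ]
        have h0 : a.take (k - 1) = List.replicate (k - 1) s := by
          have h := hcond 0
          rwa [sum_filter_lt_zero, List.drop_zero] at h
        have hsucc : ∀ i : Fin u'.length,
            ((a.drop k).drop (∑ i' ∈ Finset.univ.filter (· < i), c i'.succ)).take
                (c i.succ - 1)
              = List.replicate (c i.succ - 1) (u'.get i).1 := by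
          intro i
          have h := hcond i.succ
          rwa [sum_filter_lt_succ, ← hk, ← List.drop_drop, List.get_cons_succ'] at h
        show Good (s :: u'.map Prod.fst) a
        rcases Nat.lt_or_ge k (a.length + 1) with hklt | hkge
        · rcases Nat.eq_zero_or_pos k with hk0 | hkpos
          · have hg : Good (u'.map Prod.fst) a := (ih a).1
              ⟨fun i => c i.succ, by
                show (∑ i : Fin u'.length, c i.succ) = a.length + 1
                omega, fun i => by
                have h := hsucc i
                rwa [hk0, List.drop_zero] at h⟩
            exact hg.skip s
          · have hg : Good (u'.map Prod.fst) (a.drop k) := (ih _).1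
              ⟨fun i => c i.succ, by
                show (∑ i : Fin u'.length, c i.succ) = (a.drop k).length + 1
                rw [List.length_drop]; omega, hsucc⟩
            have hlen : k - 1 < a.length := by omega
            have ha : a = List.replicate (k - 1) s ++ a.get ⟨k - 1, hlen⟩ :: a.drop k := by
              conv_lhs => rw [← List.take_append_drop (k - 1) a]
              rw [h0]
              congr 1
              rw [List.drop_eq_getElem_cons hlen]
              congr 2
              omega
            rw [ha]
            exact hg.step s (k - 1) _
        · have hkk : k = a.length + 1 := by
            have hle : k ≤ ∑ i, c i :=
              Finset.single_le_sum (fun i _ => Nat.zero_le _) (Finset.mem_univ 0)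
            omega
          have ha : a = List.replicate a.length s := by
            have h := h0
            rw [hkk] at h
            simpa using h
          rw [ha]
          exact Good.all s _ a.length
      · intro hg
        have hg' : Good (s :: u'.map Prod.fst) a := hg
        generalize hss : u'.map Prod.fst = ss at hg'
        cases hg' with
        | all s ss k =>
            refine ⟨Fin.cons (k + 1) (fun _ => 0), ?_, ?_⟩
            · rw [Fin.sum_univ_succ, Fin.cons_zero]
              simp
            · intro i
              refine Fin.cases ?_ (fun j => ?_) i
              · rw [sum_filter_lt_zero, List.drop_zero, Fin.cons_zero]
                simp
              · rw [Fin.cons_succ]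
                simp
        | skip s hgood =>
            obtain ⟨d, hd, hcd⟩ := (ih a).2 (hss ▸ hgood)
            refine ⟨Fin.cons 0 d, ?_, ?_⟩
            · rw [Fin.sum_univ_succ, Fin.cons_zero, zero_add]
              simpa [Fin.cons_succ] using hd
            · intro i
              refine Fin.cases ?_ (fun j => ?_) i
              · simp
              · rw [sum_filter_lt_succ, Fin.cons_zero, Fin.cons_succ, zero_add]
                simp only [Fin.cons_succ, List.get_cons_succ']
                exact hcd j
        | step s k x hgood =>
            rename_i a'
            obtain ⟨d, hd, hcd⟩ := (ih a').2 (hss ▸ hgood)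
            refine ⟨Fin.cons (k + 1) d, ?_, ?_⟩
            · rw [Fin.sum_univ_succ, Fin.cons_zero]
              simp only [Fin.cons_succ, hd, List.length_append, List.length_replicate,
                List.length_cons]
              omega
            · intro i
              refine Fin.cases ?_ (fun j => ?_) i
              · rw [sum_filter_lt_zero, List.drop_zero, Fin.cons_zero]
                simp only [Nat.add_sub_cancel]
                rw [List.take_left' (by simp)]
                simp
              · rw [sum_filter_lt_succ, Fin.cons_zero, Fin.cons_succ]
                simp only [Fin.cons_succ]
                have hdrop : (List.replicate k s ++ x :: a').drop
                    (k + 1 + ∑ i' ∈ Finset.univ.filter (· < j), d i')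
                    = a'.drop (∑ i' ∈ Finset.univ.filter (· < j), d i') := by
                  rw [← List.drop_drop, show List.replicate k s ++ x :: a'
                      = (List.replicate k s ++ [x]) ++ a' by simp,
                    List.drop_left' (by simp)]
                rw [hdrop, List.get_cons_succ']
                exact hcd j

lemma Fword_pos_iff {u : List (Bool × ℝ)} (hpos : ∀ p ∈ u, 0 < p.2) (a : BW) :
    0 < Fword u a ↔ ∃ c : Fin u.length → ℕ, (∑ i, c i = a.length + 1) ∧ Cond u a c := by
  have key : ∀ c : Fin u.length → ℕ, 0 < ∏ i, (u.get i).2 ^ c i := fun c =>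
    Finset.prod_pos fun i _ => pow_pos (hpos _ (List.get_mem u i)) _
  rw [Fword]
  constructor
  · intro h
    rcases Finset.eq_empty_or_nonempty
        ((Finset.Nat.antidiagonalTuple u.length (a.length + 1)).filter
          (fun c => ∀ i : Fin u.length,
            (a.drop (∑ i' ∈ Finset.univ.filter (· < i), c i')).take (c i - 1)
              = List.replicate (c i - 1) (u.get i).1)) with he | ⟨c, hc⟩
    · rw [he, Finset.sum_empty] at h
      exact absurd h (lt_irrefl 0)
    · rw [Finset.mem_filter, Finset.Nat.mem_antidiagonalTuple] at hc
      exact ⟨c, hc.1, hc.2⟩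
  · rintro ⟨c, hsum, hcond⟩
    refine Finset.sum_pos (fun c _ => key c) ⟨c, Finset.mem_filter.2
      ⟨Finset.Nat.mem_antidiagonalTuple.2 hsum, hcond⟩⟩

/-- Proposition 3.5 of the paper.  Let `w` be a finitary oriented
paintbox (oriented intervals with positive lengths summing to `1`) and
`φ_w(λ) = F_λ(w)`.  Then `φ_w(λ) > 0` if and only if `λ ∈ Z(t_w)`: the support of
`φ_w` is exactly `Z(t_w)`. -/
theorem support_of_paintbox_function (w : List (Bool × ℝ))
    (hwpos : ∀ p ∈ w, 0 < p.2) (hwsum : (w.map Prod.snd).sum = 1) (a : BW) :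
    0 < Fword w a ↔ a ∈ Zcl (tuClusters w) := by
  have hne : w ≠ [] := by rintro rfl; simp at hwsum
  rw [Fword_pos_iff hwpos, exists_cond_iff_good]
  constructor
  · intro h
    obtain ⟨N, hN⟩ := good_to_pat h
    exact ⟨N, by rwa [clWord_tuClusters]⟩
  · rintro ⟨N, hN⟩
    rw [clWord_tuClusters] at hN
    exact pat_to_good _ (by simpa using hne) N a hN

end Zigzag
end

section
/- Let Γ be a graded graph. A saturated coideal J of Γ is primitive if and only if for any two vertices λ₁, λ₂ ∈ J there exists a vertex μ ∈ J with μ ≥ λ₁ and μ ≥ λ₂. -/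
/-!
Common definitions: graded graphs, ideals and coideals, harmonic functions and the
cone `K⁺`, finite / semifinite / indecomposable harmonic functions.
-/

open scoped ENNReal NNReal

namespace Zigzag

/-- A graded graph: vertices partitioned into finite levels, oriented edges going up
one level, every vertex having at least one outgoing edge. -/
structure GradedGraph where
  V : Type
  rank : V → ℕ
  adj : V → V → Prop
  rank_adj : ∀ ⦃x y⦄, adj x y → rank y = rank x + 1
  finLevels : ∀ n : ℕ, {x : V | rank x = n}.Finite
  outEdge : ∀ x : V, ∃ y, adj x y

namespace GradedGraph

variable (G : GradedGraph)

/-- `x ≤ y`: `y` is reachable from `x` by a directed path (possibly trivial). -/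
def le (x y : G.V) : Prop := Relation.ReflTransGen G.adj x y

/-- The finset of upper neighbours of a vertex. -/
noncomputable def upFinset (x : G.V) : Finset G.V :=
  ((G.finLevels (G.rank x + 1)).subset fun _ hy => G.rank_adj hy).toFinset

/-- A coideal: closed under going down. -/
def IsCoideal (J : Set G.V) : Prop := ∀ a ∈ J, ∀ b, G.le b a → b ∈ J

/-- A saturated coideal: a coideal in which every vertex has an upper neighbour. -/
def IsSatCoideal (J : Set G.V) : Prop :=
  G.IsCoideal J ∧ ∀ a ∈ J, ∃ b ∈ J, G.adj a b

/-- A primitive saturated coideal: a saturated coideal which is not the union of two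
strictly smaller saturated coideals. -/
def IsPrimCoideal (J : Set G.V) : Prop :=
  G.IsSatCoideal J ∧ ∀ J₁ J₂ : Set G.V, G.IsSatCoideal J₁ → G.IsSatCoideal J₂ →
    J = J₁ ∪ J₂ → J = J₁ ∨ J = J₂

/-- An ideal: closed under going up. -/
def IsIdeal (I : Set G.V) : Prop := ∀ a ∈ I, ∀ b, G.le a b → b ∈ I

/-- A `[0,∞]`-valued function on the vertices is harmonic if its value at any vertex
equals the sum of its values at the upper neighbours. -/
def Harmonic (φ : G.V → ℝ≥0∞) : Prop := ∀ x, φ x = ∑ y ∈ G.upFinset x, φ y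

/-- The relation `λ = ∑_{μ : λ ↗ μ} μ` as an element of the free module. -/
noncomputable def relOf (x : G.V) : G.V →₀ ℝ :=
  Finsupp.single x 1 - ∑ y ∈ G.upFinset x, Finsupp.single y 1

/-- The submodule of relations defining `K(Γ)`. -/
noncomputable def Krel : Submodule ℝ (G.V →₀ ℝ) :=
  Submodule.span ℝ (Set.range G.relOf)

/-- The class of `f` in `K(Γ)`. -/
noncomputable def kmk (f : G.V →₀ ℝ) : (G.V →₀ ℝ) ⧸ G.Krel :=
  Submodule.Quotient.mk f

/-- The cone `K⁺(Γ)` spanned by the vertices in `K(Γ)`. -/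
noncomputable def Kpos : Set ((G.V →₀ ℝ) ⧸ G.Krel) :=
  G.kmk '' {f | ∀ x, 0 ≤ f x}

/-- The order defined by the cone: `x ≤_K y` iff `y − x ∈ K⁺(Γ)`. -/
def leK (x y : (G.V →₀ ℝ) ⧸ G.Krel) : Prop := y - x ∈ G.Kpos

/-- The value of (the canonical extension of) `φ` at a nonnegative combination of
vertices. -/
noncomputable def phiHat (φ : G.V → ℝ≥0∞) (f : G.V →₀ ℝ) : ℝ≥0∞ :=
  ∑ x ∈ f.support, ENNReal.ofReal (f x) * φ x

/-- `φ` is everywhere finite. -/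
def FiniteH (φ : G.V → ℝ≥0∞) : Prop := ∀ x, φ x ≠ ⊤

/-- `φ` is semifinite: not everywhere finite, and its value at any element of the cone
`K⁺(Γ)` is the supremum of its values at the `≤_K`-smaller elements of the cone where
it is finite. -/
def Semifinite (φ : G.V → ℝ≥0∞) : Prop :=
  (∃ x, φ x = ⊤) ∧
  ∀ f : G.V →₀ ℝ, (∀ x, 0 ≤ f x) →
    G.phiHat φ f =
      ⨆ g ∈ {g : G.V →₀ ℝ |
        (∀ x, 0 ≤ g x) ∧ G.leK (G.kmk g) (G.kmk f) ∧ G.phiHat φ g ≠ ⊤},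
        G.phiHat φ g

/-- A semifinite harmonic function `φ` is indecomposable if any finite or semifinite
harmonic function `φ′ ≤ φ` which does not vanish identically on the finiteness ideal
of `φ` is a constant multiple of `φ` on that ideal. -/
def IndecSemifinite (φ : G.V → ℝ≥0∞) : Prop :=
  ∀ φ' : G.V → ℝ≥0∞, G.Harmonic φ' →
    (G.FiniteH φ' ∨ G.Semifinite φ') →
    (∀ x, φ' x ≤ φ x) →
    (∃ x, φ x ≠ ⊤ ∧ φ' x ≠ 0) →
    ∃ c : ℝ≥0, ∀ x, φ x ≠ ⊤ → φ' x = (c : ℝ≥0∞) * φ x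

/-- A finite harmonic function `φ` is indecomposable if any harmonic function
`φ′ ≤ φ` which is not identically zero is a constant multiple of `φ`. -/
def IndecFinite (φ : G.V → ℝ≥0∞) : Prop :=
  ∀ φ' : G.V → ℝ≥0∞, G.Harmonic φ' →
    (∀ x, φ' x ≤ φ x) → (∃ x, φ' x ≠ 0) →
    ∃ c : ℝ≥0, ∀ x, φ' x = (c : ℝ≥0∞) * φ x

/-- The number of directed paths from `x` to `y` (the shifted dimension
`dim(x, y)`). -/
noncomputable def gdim (x y : G.V) : ℕ :=
  Nat.card {p : List G.V // p.Chain' G.adj ∧ p.head? = some x ∧ p.getLast? = some y}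

end GradedGraph

end Zigzag

namespace Zigzag

/-- A saturated coideal `J` of a graded graph `Γ` is primitive if
and only if any two vertices of `J` admit a common upper bound in `J`. -/
theorem saturated_coideal_primitive_iff (G : GradedGraph) (J : Set G.V)
    (hJ : G.IsSatCoideal J) :
    G.IsPrimCoideal J ↔
      ∀ a ∈ J, ∀ b ∈ J, ∃ c ∈ J, G.le a c ∧ G.le b c := by
  constructor
  · rintro ⟨-, hprim⟩ a ha b hb
    set J₁ : Set G.V := {x | x ∈ J ∧ ∃ c ∈ J, G.le a c ∧ G.le x c} with hJ₁def
    set J₂ : Set G.V := {y | y ∈ J ∧ ∃ x, x ∈ J ∧ x ∉ J₁ ∧ G.le y x} with hJ₂def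
    have hsat₁ : G.IsSatCoideal J₁ := by
      constructor
      · rintro x ⟨hxJ, c, hcJ, hac, hxc⟩ y hyx
        exact ⟨hJ.1 x hxJ y hyx, c, hcJ, hac, hyx.trans hxc⟩
      · rintro x ⟨hxJ, c, hcJ, hac, hxc⟩
        rcases hxc.cases_head with rfl | ⟨x', hxx', hx'c⟩
        · obtain ⟨d, hdJ, hcd⟩ := hJ.2 x hxJ
          exact ⟨d, ⟨hdJ, d, hdJ, hac.trans (Relation.ReflTransGen.single hcd),
            Relation.ReflTransGen.refl⟩, hcd⟩
        · exact ⟨x', ⟨hJ.1 c hcJ x' hx'c, c, hcJ, hac, hx'c⟩, hxx'⟩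
    have hsat₂ : G.IsSatCoideal J₂ := by
      constructor
      · rintro y ⟨hyJ, x, hxJ, hx₁, hyx⟩ z hzy
        exact ⟨hJ.1 y hyJ z hzy, x, hxJ, hx₁, hzy.trans hyx⟩
      · rintro y ⟨hyJ, x, hxJ, hx₁, hyx⟩
        rcases hyx.cases_head with rfl | ⟨y', hyy', hy'x⟩
        · obtain ⟨z, hzJ, hyz⟩ := hJ.2 y hyJ
          refine ⟨z, ⟨hzJ, z, hzJ, ?_, Relation.ReflTransGen.refl⟩, hyz⟩
          rintro ⟨-, c, hcJ, hac, hzc⟩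
          exact hx₁ ⟨hxJ, c, hcJ, hac, (Relation.ReflTransGen.single hyz).trans hzc⟩
        · exact ⟨y', ⟨hJ.1 x hxJ y' hy'x, x, hxJ, hx₁, hy'x⟩, hyy'⟩
    have hunion : J = J₁ ∪ J₂ := by
      ext x
      constructor
      · intro hx
        by_cases hx₁ : x ∈ J₁
        · exact Or.inl hx₁
        · exact Or.inr ⟨hx, x, hx, hx₁, Relation.ReflTransGen.refl⟩
      · rintro (⟨h, -⟩ | ⟨h, -⟩) <;> exact h
    rcases hprim J₁ J₂ hsat₁ hsat₂ hunion with h | h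
    · have := h ▸ hb
      obtain ⟨-, c, hcJ, hac, hbc⟩ := this
      exact ⟨c, hcJ, hac, hbc⟩
    · exfalso
      have : a ∈ J₂ := h ▸ ha
      obtain ⟨-, x, hxJ, hx₁, hax⟩ := this
      exact hx₁ ⟨hxJ, x, hxJ, hax, Relation.ReflTransGen.refl⟩
  · intro hdir
    refine ⟨hJ, fun J₁ J₂ h₁ h₂ hu => ?_⟩
    by_contra hne
    push_neg at hne
    obtain ⟨hn₁, hn₂⟩ := hne
    have h₁ss : J₁ ⊆ J := hu ▸ Set.subset_union_left
    have h₂ss : J₂ ⊆ J := hu ▸ Set.subset_union_right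
    obtain ⟨a, haJ, ha₁⟩ : ∃ a ∈ J, a ∉ J₁ := by
      by_contra h
      push_neg at h
      exact hn₁ (Set.Subset.antisymm h h₁ss)
    obtain ⟨b, hbJ, hb₂⟩ : ∃ b ∈ J, b ∉ J₂ := by
      by_contra h
      push_neg at h
      exact hn₂ (Set.Subset.antisymm h h₂ss)
    obtain ⟨c, hcJ, hac, hbc⟩ := hdir a haJ b hbJ
    have : c ∈ J₁ ∪ J₂ := hu ▸ hcJ
    rcases this with hc | hc
    · exact ha₁ (h₁.1 c hc a hac)
    · exact hb₂ (h₂.1 c hc b hbc)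

end Zigzag
end

section
/- Let Γ be a branching graph. Every nonempty saturated primitive coideal of Γ is of the form Γ_τ = ∪_{n≥1} {λ ∈ Γ : λ ≤ λ_n} for some infinite path τ = (∅ ↗ λ₁ ↗ λ₂ ↗ ⋯) starting at the root ∅. -/
/-!
Common definitions: graded graphs, ideals and coideals, harmonic functions and the
cone `K⁺`, finite / semifinite / indecomposable harmonic functions.
-/

open scoped ENNReal NNReal

namespace Zigzag

namespace GradedGraph

variable (G : GradedGraph)

lemma le_refl' (x : G.V) : G.le x x := Relation.ReflTransGen.refl

lemma rank_le_of_le {x y : G.V} (h : G.le x y) : G.rank x ≤ G.rank y := by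
  induction h with
  | refl => exact le_rfl
  | tail _ hadj ih =>
    have := G.rank_adj hadj
    omega

lemma exists_adj_of_le_ne {x y : G.V} (h : G.le x y) (hne : x ≠ y) :
    ∃ z, G.adj x z ∧ G.le z y := by
  rcases (Relation.ReflTransGen.cases_head h) with h | ⟨z, hz, hzy⟩
  · exact absurd h hne
  · exact ⟨z, hz, hzy⟩

end GradedGraph

/-- In a branching graph (level `0` is a singleton `{∅}` and every
vertex of positive level has an incoming edge), every nonempty saturated primitive
coideal is of the form `Γ_τ = ∪_n {λ : λ ≤ λ_n}` for an infinite path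
`τ = (∅ ↗ λ₁ ↗ λ₂ ↗ ⋯)` starting at the root. -/
theorem primitive_coideal_eq_path_coideal (G : GradedGraph) (root : G.V)
    (hroot : ∀ x, G.rank x = 0 ↔ x = root)
    (hbranch : ∀ x, 0 < G.rank x → ∃ y, G.adj y x)
    (J : Set G.V) (hJ : G.IsPrimCoideal J) (hne : J.Nonempty) :
    ∃ τ : ℕ → G.V, τ 0 = root ∧ (∀ n, G.adj (τ n) (τ (n + 1))) ∧
      J = {x | ∃ n, G.le x (τ n)} := by
  classical
  obtain ⟨⟨hco, hsat⟩, hprim⟩ := hJ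
  -- the root is below everything
  have hrle : ∀ n x, G.rank x = n → G.le root x := by
    intro n
    induction n using Nat.strong_induction_on with
    | _ n ih =>
      intro x hn
      cases n with
      | zero =>
        rw [(hroot x).mp hn]
        exact Relation.ReflTransGen.refl
      | succ m =>
        obtain ⟨y, hy⟩ := hbranch x (by omega)
        have hym : G.rank y = m := by have := G.rank_adj hy; omega
        exact (ih m (by omega) y hym).tail hy
  have hrootJ : root ∈ J := by
    obtain ⟨a, ha⟩ := hne
    exact hco a ha root (hrle (G.rank a) a rfl)
  -- J is upward directed (this is where primitivity is used)
  have hdir : ∀ l ∈ J, ∀ m ∈ J, ∃ ν ∈ J, G.le l ν ∧ G.le m ν := by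
    intro l hl m hm
    set A : Set G.V := {x | ∃ ν ∈ J, G.le l ν ∧ G.le x ν} with hA
    set B : Set G.V := {y | ∃ x, (x ∈ J ∧ x ∉ A) ∧ G.le y x} with hB
    have hAsat : G.IsSatCoideal A := by
      constructor
      · rintro a ⟨ν, hν, h1, h2⟩ b hb
        exact ⟨ν, hν, h1, hb.trans h2⟩
      · rintro a ⟨ν, hν, h1, h2⟩
        by_cases hav : a = ν
        · obtain ⟨ν', hν', hadj⟩ := hsat ν hν
          exact ⟨ν', ⟨ν', hν', h1.tail hadj, G.le_refl' ν'⟩, hav ▸ hadj⟩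
        · obtain ⟨z, hadj, hz⟩ := G.exists_adj_of_le_ne h2 hav
          exact ⟨z, ⟨ν, hν, h1, hz⟩, hadj⟩
    have hBsat : G.IsSatCoideal B := by
      constructor
      · rintro a ⟨x, hx, hlex⟩ b hb
        exact ⟨x, hx, hb.trans hlex⟩
      · rintro y ⟨x, ⟨hxJ, hxA⟩, hlex⟩
        by_cases hyx : y = x
        · obtain ⟨x', hx', hadj⟩ := hsat x hxJ
          have hx'A : x' ∉ A := by
            rintro ⟨ν, hν, h1, h2⟩
            exact hxA ⟨ν, hν, h1, (Relation.ReflTransGen.single hadj).trans h2⟩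
          exact ⟨x', ⟨x', ⟨hx', hx'A⟩, G.le_refl' x'⟩, hyx ▸ hadj⟩
        · obtain ⟨z, hadj, hz⟩ := G.exists_adj_of_le_ne hlex hyx
          exact ⟨z, ⟨x, ⟨hxJ, hxA⟩, hz⟩, hadj⟩
    have hJAB : J = A ∪ B := by
      apply Set.Subset.antisymm
      · intro x hx
        by_cases hxA : x ∈ A
        · exact Or.inl hxA
        · exact Or.inr ⟨x, ⟨hx, hxA⟩, G.le_refl' x⟩
      · rintro x (⟨ν, hν, _, h2⟩ | ⟨y, ⟨hyJ, _⟩, hly⟩)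
        · exact hco ν hν x h2
        · exact hco y hyJ x hly
    rcases hprim A B hAsat hBsat hJAB with hJA | hJB
    · rw [hJA] at hm
      obtain ⟨ν, hν, h1, h2⟩ := hm
      exact ⟨ν, hν, h1, h2⟩
    · exfalso
      rw [hJB] at hl
      obtain ⟨x, ⟨hxJ, hxA⟩, hlx⟩ := hl
      exact hxA ⟨x, hxJ, hlx, G.le_refl' x⟩
  -- finite subsets of J have upper bounds in J
  have hub : ∀ s : Finset G.V, ↑s ⊆ J → ∃ ν ∈ J, ∀ x ∈ s, G.le x ν := by
    intro s
    induction s using Finset.induction_on with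
    | empty => exact fun _ => ⟨root, hrootJ, by simp⟩
    | @insert a s ha ih =>
      intro hs
      obtain ⟨ν, hν, hall⟩ := ih (fun x hx => hs (by simp [hx]))
      obtain ⟨ν', hν', h1, h2⟩ := hdir a (hs (by simp)) ν hν
      refine ⟨ν', hν', fun x hx => ?_⟩
      rcases Finset.mem_insert.mp hx with rfl | h
      · exact h1
      · exact (hall x h).trans h2
  -- for each level, an element of J dominating all of J at that level
  have hmu : ∀ k : ℕ, ∃ ν ∈ J, ∀ x ∈ J, G.rank x = k → G.le x ν := by
    intro k
    have hfin : ({x | G.rank x = k} ∩ J).Finite := (G.finLevels k).inter_of_left J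
    obtain ⟨ν, hν, hall⟩ := hub hfin.toFinset
      (fun x hx => ((hfin.mem_toFinset).mp hx).2)
    exact ⟨ν, hν, fun x hxJ hr => hall x ((hfin.mem_toFinset).mpr ⟨hr, hxJ⟩)⟩
  choose μ hμJ hμub using hmu
  -- an increasing chain in J: nu (k+1) dominates nu k and μ k, with strictly bigger rank
  have hstep : ∀ v ∈ J, ∀ k : ℕ, ∃ w ∈ J,
      G.le v w ∧ G.le (μ k) w ∧ G.rank v < G.rank w := by
    intro v hv k
    obtain ⟨ν, hν, h1, h2⟩ := hdir v hv (μ k) (hμJ k)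
    obtain ⟨w, hw, hadj⟩ := hsat ν hν
    refine ⟨w, hw, h1.tail hadj, h2.tail hadj, ?_⟩
    have h3 := G.rank_adj hadj
    have h4 := G.rank_le_of_le h1
    omega
  choose! f hf1 hf2 hf3 hf4 using hstep
  let nu : ℕ → G.V := fun n => Nat.rec root (fun k p => f p k) n
  have hnuJ : ∀ k, nu k ∈ J := by
    intro k
    induction k with
    | zero => exact hrootJ
    | succ k ih => exact hf1 _ ih k
  have hnule : ∀ k, G.le (nu k) (nu (k + 1)) := fun k => hf2 _ (hnuJ k) k
  have hnumu : ∀ k, G.le (μ k) (nu (k + 1)) := fun k => hf3 _ (hnuJ k) k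
  have hnurank : ∀ k, G.rank (nu k) < G.rank (nu (k + 1)) := fun k => hf4 _ (hnuJ k) k
  have hnurank' : ∀ j k, j ≤ k → G.rank (nu j) ≤ G.rank (nu k) := by
    intro j k h
    induction k with
    | zero =>
      have hj : j = 0 := Nat.le_zero.mp h
      rw [hj]
    | succ k ih =>
      rcases Nat.lt_or_ge j (k + 1) with h' | h'
      · exact (ih (by omega)).trans (hnurank k).le
      · have : j = k + 1 := by omega
        rw [this]
  -- next-step choice for the interpolating path
  have hnext : ∀ v k, v ∈ J → G.le v (nu k) →
      ∃ p : G.V × ℕ, G.adj v p.1 ∧ p.1 ∈ J ∧ G.le p.1 (nu p.2) ∧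
        k ≤ p.2 ∧ p.2 ≤ k + 1 ∧ (p.2 = k + 1 → v = nu k) := by
    intro v k hv hle
    rcases Classical.em (v = nu k) with hvk | hvk
    · have hle' : G.le v (nu (k + 1)) := hle.trans (hnule k)
      have hne' : v ≠ nu (k + 1) := by
        intro h
        have h1 := hnurank k
        rw [← h, ← hvk] at h1
        omega
      obtain ⟨w, hadj, hw⟩ := G.exists_adj_of_le_ne hle' hne'
      exact ⟨(w, k + 1), hadj, hco _ (hnuJ (k + 1)) w hw, hw, by omega, by omega,
        fun _ => hvk⟩
    · obtain ⟨w, hadj, hw⟩ := G.exists_adj_of_le_ne hle hvk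
      exact ⟨(w, k), hadj, hco _ (hnuJ k) w hw, hw, le_rfl, by omega,
        fun h => absurd h (by omega)⟩
  choose! g hg1 hg2 hg3 hg4 hg5 hg6 using hnext
  let p : ℕ → G.V × ℕ := fun n => Nat.rec (root, 0) (fun _ q => g q.1 q.2) n
  have hInv : ∀ n, (p n).1 ∈ J ∧ G.le (p n).1 (nu (p n).2) := by
    intro n
    induction n with
    | zero => exact ⟨hrootJ, G.le_refl' root⟩
    | succ n ih => exact ⟨hg2 _ _ ih.1 ih.2, hg3 _ _ ih.1 ih.2⟩
  have hadjτ : ∀ n, G.adj (p n).1 (p (n + 1)).1 :=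
    fun n => hg1 _ _ (hInv n).1 (hInv n).2
  have hrankτ : ∀ n, G.rank (p n).1 = n := by
    intro n
    induction n with
    | zero => exact (hroot root).mpr rfl
    | succ n ih => rw [G.rank_adj (hadjτ n), ih]
  have hκ1 : ∀ n, (p n).2 ≤ (p (n + 1)).2 := fun n => hg4 _ _ (hInv n).1 (hInv n).2
  have hκ2 : ∀ n, (p (n + 1)).2 ≤ (p n).2 + 1 := fun n => hg5 _ _ (hInv n).1 (hInv n).2
  have hκ3 : ∀ n, (p (n + 1)).2 = (p n).2 + 1 → (p n).1 = nu ((p n).2) :=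
    fun n => hg6 _ _ (hInv n).1 (hInv n).2
  have hbound : ∀ n, n ≤ G.rank (nu ((p n).2)) := by
    intro n
    have := G.rank_le_of_le (hInv n).2
    rw [hrankτ n] at this
    exact this
  -- the target indices (p n).2 are unbounded
  have hunb : ∀ j, ∃ n, j < (p n).2 := by
    intro j
    by_contra h
    push_neg at h
    have h1 : ∀ n : ℕ, n ≤ G.rank (nu j) := by
      intro n
      exact (hbound n).trans (hnurank' _ _ (h n))
    exact absurd (h1 (G.rank (nu j) + 1)) (by omega)
  -- every nu j is hit by the path
  have hhit : ∀ j, ∃ n, (p n).1 = nu j := by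
    intro j
    obtain ⟨m, hm⟩ := hunb j
    have key : ∀ m, j < (p m).2 → ∃ n, (p n).2 = j ∧ (p (n + 1)).2 = (p n).2 + 1 := by
      intro m
      induction m with
      | zero =>
          intro h
          rw [show (p 0).2 = 0 from rfl] at h
          omega
      | succ m ih =>
        intro h
        by_cases h' : j < (p m).2
        · exact ih h'
        · have e1 := hκ1 m
          have e2 := hκ2 m
          exact ⟨m, by omega, by omega⟩
    obtain ⟨n, hn1, hn2⟩ := key m hm
    exact ⟨n, by rw [hκ3 n hn2, hn1]⟩
  refine ⟨fun n => (p n).1, rfl, hadjτ, ?_⟩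
  ext x
  simp only [Set.mem_setOf_eq]
  constructor
  · intro hx
    obtain ⟨n, hn⟩ := hhit (G.rank x + 1)
    refine ⟨n, ?_⟩
    rw [hn]
    exact (hμub (G.rank x) x hx rfl).trans (hnumu (G.rank x))
  · rintro ⟨n, hn⟩
    exact hco _ (hInv n).1 x hn

end Zigzag
end
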